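/- arXiv:1204.0957 — 7 statements merged into one kernel-verified Lean document; each statement's English description precedes it below -/
import Mathlib

section
/- The matrices T_a = (−1,a)(−1,a)ᵀ and U_b = (1,b)(1,b)ᵀ for a, b ∈ {0,1}^n are positive semidefinite, and hence the 2^n × 2^n matrix M with M_{a,b} = (1 − aᵀb)² admits a PSD-factorization of rank n+1. -/
/-- The 0/1 real vector associated to a Boolean vector. -/
def bvec {n : ℕ} (a : Fin n → Bool) : Fin n → ℝ := fun i => if a i then 1 else 0

lemma vecMulVec_self_posSemidef {m : ℕ} (v : Fin m → ℝ) :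
    (Matrix.vecMulVec v v).PosSemidef := by
  rw [Matrix.posSemidef_iff_dotProduct_mulVec]
  constructor
  · ext i j
    simp [Matrix.vecMulVec, Matrix.conjTranspose_apply, mul_comm]
  · intro x
    have : (Matrix.vecMulVec v v).mulVec x = fun i => v i * ∑ j, v j * x j := by
      ext i
      simp [Matrix.mulVec, Matrix.vecMulVec, dotProduct, Finset.mul_sum, mul_assoc]
    rw [this]
    simp only [dotProduct, Pi.star_apply, star_trivial]
    have : ∑ i, x i * (v i * ∑ j, v j * x j)
        = (∑ j, v j * x j) * (∑ j, v j * x j) := by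
      rw [Finset.sum_mul]
      apply Finset.sum_congr rfl
      intro i _
      ring
    rw [this]
    exact mul_self_nonneg _

/-- The matrices `T_a = (−1,a)(−1,a)ᵀ` and `U_b = (1,b)(1,b)ᵀ` for `a, b ∈ {0,1}ⁿ`
are positive semidefinite, and hence the `2ⁿ × 2ⁿ` matrix `M` with
`M_{a,b} = (1 − aᵀb)²` admits a PSD-factorization of rank `n+1`. -/
theorem psd_factorization_udisj_sq (n : ℕ) :
    ∃ T U : (Fin n → Bool) → Matrix (Fin (n+1)) (Fin (n+1)) ℝ,
      (∀ a, T a = Matrix.vecMulVec (Fin.cons (-1) (bvec a)) (Fin.cons (-1) (bvec a))) ∧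
      (∀ b, U b = Matrix.vecMulVec (Fin.cons 1 (bvec b)) (Fin.cons 1 (bvec b))) ∧
      (∀ a, (T a).PosSemidef) ∧ (∀ b, (U b).PosSemidef) ∧
      (∀ a b : Fin n → Bool,
        ∑ i, ∑ j, T a i j * U b i j = (1 - ∑ i, bvec a i * bvec b i) ^ 2) := by
  refine ⟨fun a => Matrix.vecMulVec (Fin.cons (-1) (bvec a)) (Fin.cons (-1) (bvec a)),
    fun b => Matrix.vecMulVec (Fin.cons 1 (bvec b)) (Fin.cons 1 (bvec b)),
    fun _ => rfl, fun _ => rfl,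
    fun a => vecMulVec_self_posSemidef _, fun b => vecMulVec_self_posSemidef _, ?_⟩
  intro a b
  set v : Fin (n+1) → ℝ := Fin.cons (-1) (bvec a)
  set w : Fin (n+1) → ℝ := Fin.cons 1 (bvec b)
  have key : ∑ i, ∑ j, (Matrix.vecMulVec v v) i j * (Matrix.vecMulVec w w) i j
      = (∑ i, v i * w i) ^ 2 := by
    simp only [Matrix.vecMulVec_apply, sq, Finset.sum_mul, Finset.mul_sum]
    apply Finset.sum_congr rfl; intro i _
    apply Finset.sum_congr rfl; intro j _
    ring
  rw [key]
  have : ∑ i, v i * w i = -1 + ∑ i, bvec a i * bvec b i := by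
    rw [Fin.sum_univ_succ]
    simp [v, w, Fin.cons]
  rw [this]; ring
end

section
/- Let P ⊆ Q ⊆ ℝ^d be polyhedra and suppose S^{P,Q} = T·U is a rank-r nonnegative factorization of a slack matrix of the pair P, Q (w.r.t. generating points v_j of P and inequalities A_i x ≤ b_i of Q). Then the polyhedron K = {x : ∃ y ≥ 0, A x + T y = b} satisfies P ⊆ K ⊆ Q. Consequently, xc(P,Q) ≤ nnegrk(S^{P,Q}). -/
/-- The nonnegative rank of a real matrix. -/
noncomputable def nnegRank {α β : Type*} [Fintype α] [Fintype β] (M : Matrix α β ℝ) : ℕ :=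
  sInf {r : ℕ | ∃ T : Matrix α (Fin r) ℝ, ∃ U : Matrix (Fin r) β ℝ,
    (∀ i j, 0 ≤ T i j) ∧ (∀ i j, 0 ≤ U i j) ∧ M = T * U}

/-- The extension complexity of a pair of nested sets `P ⊆ Q ⊆ ℝ^d`: the minimum `r`
such that some system `E x + F y = g`, `y ∈ ℝ^r`, `y ≥ 0` projects to a set `K`
with `P ⊆ K ⊆ Q`. -/
noncomputable def xcPair (d : ℕ) (P Q : Set (Fin d → ℝ)) : ℕ :=
  sInf {r : ℕ | ∃ p : ℕ, ∃ E : Matrix (Fin p) (Fin d) ℝ, ∃ F : Matrix (Fin p) (Fin r) ℝ,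
    ∃ g : Fin p → ℝ,
      P ⊆ {x | ∃ y : Fin r → ℝ, (∀ k, 0 ≤ y k) ∧ E.mulVec x + F.mulVec y = g} ∧
      {x | ∃ y : Fin r → ℝ, (∀ k, 0 ≤ y k) ∧ E.mulVec x + F.mulVec y = g} ⊆ Q}

lemma slack_key {d m n : ℕ}
    (A : Matrix (Fin m) (Fin d) ℝ) (b : Fin m → ℝ) (v : Fin n → Fin d → ℝ)
    (r : ℕ) (T : Matrix (Fin m) (Fin r) ℝ) (U : Matrix (Fin r) (Fin n) ℝ)
    (hT : ∀ i k, 0 ≤ T i k) (hU : ∀ k j, 0 ≤ U k j)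
    (hfact : ∀ i j, b i - A.mulVec (v j) i = ∑ k, T i k * U k j) :
    (convexHull ℝ (Set.range v) ⊆
        {x : Fin d → ℝ | ∃ y : Fin r → ℝ, (∀ k, 0 ≤ y k) ∧
          ∀ i, A.mulVec x i + ∑ k, T i k * y k = b i}) ∧
    ({x : Fin d → ℝ | ∃ y : Fin r → ℝ, (∀ k, 0 ≤ y k) ∧
          ∀ i, A.mulVec x i + ∑ k, T i k * y k = b i} ⊆
        {x | ∀ i, A.mulVec x i ≤ b i}) := by
  constructor
  · apply convexHull_min
    · rintro x ⟨j, rfl⟩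
      exact ⟨fun k => U k j, fun k => hU k j, fun i => by have := hfact i j; linarith⟩
    · rintro x₁ ⟨y₁, hy₁, he₁⟩ x₂ ⟨y₂, hy₂, he₂⟩ a c ha hc hac
      refine ⟨fun k => a * y₁ k + c * y₂ k,
        fun k => by have := hy₁ k; have := hy₂ k; positivity, fun i => ?_⟩
      have hmv : A.mulVec (a • x₁ + c • x₂) i = a * A.mulVec x₁ i + c * A.mulVec x₂ i := by
        simp [Matrix.mulVec_add, Matrix.mulVec_smul]
      have hs : ∑ k, T i k * (a * y₁ k + c * y₂ k)
          = a * ∑ k, T i k * y₁ k + c * ∑ k, T i k * y₂ k := by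
        rw [Finset.mul_sum, Finset.mul_sum, ← Finset.sum_add_distrib]
        exact Finset.sum_congr rfl fun k _ => by ring
      rw [hmv, hs]
      linear_combination a * he₁ i + c * he₂ i + b i * hac
  · rintro x ⟨y, hy, he⟩ i
    have hnn : 0 ≤ ∑ k, T i k * y k :=
      Finset.sum_nonneg fun k _ => mul_nonneg (hT i k) (hy k)
    have := he i
    linarith

/-- If `S^{P,Q} = T·U` is a rank-`r` nonnegative factorization of a slack matrix of the
pair `P = conv{v_j}`, `Q = {x : A x ≤ b}`, then the polyhedron
`K = {x : ∃ y ≥ 0, A x + T y = b}` satisfies `P ⊆ K ⊆ Q`.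
Consequently `xc(P,Q) ≤ nnegrk(S^{P,Q})`. -/
theorem slack_factorization_gives_EF {d m n : ℕ}
    (A : Matrix (Fin m) (Fin d) ℝ) (b : Fin m → ℝ) (v : Fin n → Fin d → ℝ)
    (r : ℕ) (T : Matrix (Fin m) (Fin r) ℝ) (U : Matrix (Fin r) (Fin n) ℝ)
    (hT : ∀ i k, 0 ≤ T i k) (hU : ∀ k j, 0 ≤ U k j)
    (hfact : ∀ i j, b i - A.mulVec (v j) i = ∑ k, T i k * U k j) :
    (convexHull ℝ (Set.range v) ⊆
        {x : Fin d → ℝ | ∃ y : Fin r → ℝ, (∀ k, 0 ≤ y k) ∧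
          ∀ i, A.mulVec x i + ∑ k, T i k * y k = b i}) ∧
    ({x : Fin d → ℝ | ∃ y : Fin r → ℝ, (∀ k, 0 ≤ y k) ∧
          ∀ i, A.mulVec x i + ∑ k, T i k * y k = b i} ⊆
        {x | ∀ i, A.mulVec x i ≤ b i}) ∧
    xcPair d (convexHull ℝ (Set.range v)) {x | ∀ i, A.mulVec x i ≤ b i} ≤
      nnegRank (Matrix.of fun i j => b i - A.mulVec (v j) i) := by
  obtain ⟨h1, h2⟩ := slack_key A b v r T U hT hU hfact
  refine ⟨h1, h2, ?_⟩
  have hmem : nnegRank (Matrix.of fun i j => b i - A.mulVec (v j) i) ∈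
      {r' : ℕ | ∃ T' : Matrix (Fin m) (Fin r') ℝ, ∃ U' : Matrix (Fin r') (Fin n) ℝ,
        (∀ i j, 0 ≤ T' i j) ∧ (∀ i j, 0 ≤ U' i j) ∧
        (Matrix.of fun i j => b i - A.mulVec (v j) i) = T' * U'} := by
    apply Nat.sInf_mem
    exact ⟨r, T, U, hT, hU, by ext i j; simpa [Matrix.mul_apply] using hfact i j⟩
  obtain ⟨T', U', hT', hU', hM⟩ := hmem
  have hfact' : ∀ i j, b i - A.mulVec (v j) i = ∑ k, T' i k * U' k j := by
    intro i j
    have := congrFun (congrFun hM i) j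
    simpa [Matrix.mul_apply] using this
  obtain ⟨k1, k2⟩ := slack_key A b v _ T' U' hT' hU' hfact'
  apply Nat.sInf_le
  refine ⟨m, A, T', b, ?_, ?_⟩
  · intro x hx
    obtain ⟨y, hy, he⟩ := k1 hx
    exact ⟨y, hy, funext fun i => by simpa [Matrix.mulVec, dotProduct] using he i⟩
  · rintro x ⟨y, hy, he⟩
    exact k2 ⟨y, hy, fun i => by simpa [Matrix.mulVec, dotProduct] using congrFun he i⟩
end

section
/- Let P ⊆ Q ⊆ ℝ^d be polytopes and suppose E x + F y = g, y ≥ 0 (y ∈ ℝ^r) defines a polyhedron projecting to K with P ⊆ K ⊆ Q. Then the slack matrix S^{P,Q} (w.r.t. any vertex description of P and inequality description of Q) admits a nonnegative factorization of rank at most r + 1, i.e., nnegrk(S^{P,Q}) ≤ xc(P,Q) + 1. -/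
open Finset
open scoped RealInnerProductSpace


lemma carath_cone {E : Type*} [AddCommGroup E] [Module ℝ E] {ι : Type*} [Fintype ι]
    [DecidableEq ι] (w : ι → E) (c : ι → ℝ) (hc : ∀ i, 0 ≤ c i) :
    ∃ c' : ι → ℝ, (∀ i, 0 ≤ c' i) ∧ ∑ i, c' i • w i = ∑ i, c i • w i ∧
      LinearIndependent ℝ (fun i : {i // c' i ≠ 0} => w i) := by
  suffices h : ∀ (k : ℕ) (c : ι → ℝ), (∀ i, 0 ≤ c i) →
      (Finset.univ.filter fun i => c i ≠ 0).card ≤ k →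
      ∃ c' : ι → ℝ, (∀ i, 0 ≤ c' i) ∧ ∑ i, c' i • w i = ∑ i, c i • w i ∧
        LinearIndependent ℝ (fun i : {i // c' i ≠ 0} => w i) from
    h _ c hc le_rfl
  intro k
  induction k with
  | zero =>
    intro c hc hcard
    refine ⟨c, hc, rfl, ?_⟩
    have hempty : ∀ i, ¬ c i ≠ 0 := by
      intro i hi
      have : i ∈ Finset.univ.filter fun i => c i ≠ 0 := by simp [hi]
      have := Finset.card_pos.mpr ⟨i, this⟩
      omega
    have : IsEmpty {i // c i ≠ 0} := ⟨fun i => hempty i.1 i.2⟩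
    exact linearIndependent_empty_type
  | succ k ih =>
    intro c hc hcard
    by_cases hli : LinearIndependent ℝ (fun i : {i // c i ≠ 0} => w i)
    · exact ⟨c, hc, rfl, hli⟩
    obtain ⟨g, hgsum, i₀, hgi₀⟩ := Fintype.not_linearIndependent_iff.mp hli
    -- make sure there is a positive coefficient
    obtain ⟨g, hgsum, i₀, hgi₀⟩ :
        ∃ g : {i // c i ≠ 0} → ℝ, ∑ i, g i • w i.1 = 0 ∧ ∃ i, 0 < g i := by
      rcases lt_or_gt_of_ne hgi₀ with h0 | h0
      · refine ⟨-g, by simpa using hgsum, i₀, by simpa using h0⟩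
      · exact ⟨g, hgsum, i₀, h0⟩
    classical
    set G : ι → ℝ := fun i => if h : c i ≠ 0 then g ⟨i, h⟩ else 0 with hG
    have hGsum : ∑ i, G i • w i = 0 := by
    -- restrict to the support of c
      have h1 : ∑ i, G i • w i = ∑ i ∈ Finset.univ.filter (fun i => c i ≠ 0), G i • w i := by
        refine (Finset.sum_subset (Finset.filter_subset _ _) fun i _ hi => ?_).symm
        simp only [Finset.mem_filter, Finset.mem_univ, true_and, not_not] at hi
        simp [hG, hi]
      have h2 : ∑ i ∈ Finset.univ.filter (fun i => c i ≠ 0), G i • w i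
          = ∑ i : {i // c i ≠ 0}, G i.1 • w i.1 :=
        Finset.sum_subtype _ (by simp) _
      rw [h1, h2, ← hgsum]
      exact Finset.sum_congr rfl fun i _ => by simp [hG, i.2]
    -- choose the minimizing index
    have hne : (Finset.univ.filter fun i => 0 < G i).Nonempty := by
      refine ⟨i₀.1, ?_⟩
      simp only [Finset.mem_filter, Finset.mem_univ, true_and]
      simpa [hG, i₀.2] using hgi₀
    obtain ⟨i₁, hi₁mem, hi₁min⟩ :=
      Finset.exists_min_image _ (fun i => c i / G i) hne
    simp only [Finset.mem_filter, Finset.mem_univ, true_and] at hi₁mem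
    set t : ℝ := c i₁ / G i₁ with ht
    have ht0 : 0 ≤ t := div_nonneg (hc i₁) hi₁mem.le
    set c'' : ι → ℝ := fun i => c i - t * G i with hc''
    have hc''nonneg : ∀ i, 0 ≤ c'' i := by
      intro i
      by_cases hGi : 0 < G i
      · have := hi₁min i (by simp [hGi])
        have : t * G i ≤ c i := by
          rw [ht]
          calc c i₁ / G i₁ * G i ≤ c i / G i * G i := by
                exact mul_le_mul_of_nonneg_right this hGi.le
            _ = c i := div_mul_cancel₀ _ hGi.ne'
        simp [hc'']; linarith
      · push_neg at hGi
        have : t * G i ≤ 0 := mul_nonpos_of_nonneg_of_nonpos ht0 hGi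
        have := hc i
        simp [hc'']; linarith
    have hc''sum : ∑ i, c'' i • w i = ∑ i, c i • w i := by
      simp only [hc'', sub_smul, Finset.sum_sub_distrib, mul_smul]
      rw [← Finset.smul_sum, hGsum, smul_zero, sub_zero]
    have hsubset : (Finset.univ.filter fun i => c'' i ≠ 0)
        ⊂ (Finset.univ.filter fun i => c i ≠ 0) := by
      constructor
      · intro i hi
        simp only [Finset.mem_filter, Finset.mem_univ, true_and] at hi ⊢
        intro hci
        apply hi
        have : G i = 0 := by simp [hG, hci]
        simp [hc'', hci, this]
      · intro hsub
        have hci₁ : c i₁ ≠ 0 ∨ c i₁ = 0 := ne_or_eq _ _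
        have hGi₁ : c i₁ ≠ 0 := by
          intro h0
          have : G i₁ = 0 := by simp [hG, h0]
          rw [this] at hi₁mem; exact lt_irrefl _ hi₁mem
        have : i₁ ∈ Finset.univ.filter fun i => c'' i ≠ 0 := by
          apply hsub; simp [hGi₁]
        simp only [Finset.mem_filter, Finset.mem_univ, true_and] at this
        apply this
        simp [hc'', ht, div_mul_cancel₀ _ hi₁mem.ne']
    have hcard' : (Finset.univ.filter fun i => c'' i ≠ 0).card ≤ k := by
      have := Finset.card_lt_card hsubset
      omega
    obtain ⟨c', h1, h2, h3⟩ := ih c'' hc''nonneg hcard'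
    exact ⟨c', h1, h2.trans hc''sum, h3⟩


/-- The linear map sending coefficients to the corresponding combination. -/
noncomputable def combMap {H : Type*} [AddCommGroup H] [Module ℝ H] {ι : Type*} [Fintype ι]
    (w : ι → H) : (ι → ℝ) →ₗ[ℝ] H where
  toFun c := ∑ i, c i • w i
  map_add' a b := by simp [add_smul, Finset.sum_add_distrib]
  map_smul' r a := by simp [smul_smul, Finset.smul_sum]

lemma isClosed_nonneg_pi {ι : Type*} [Fintype ι] :
    IsClosed {c : ι → ℝ | ∀ i, 0 ≤ c i} := by
  have : {c : ι → ℝ | ∀ i, 0 ≤ c i} = ⋂ i, {c | 0 ≤ c i} := by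
    ext c; simp [Set.mem_iInter]
  rw [this]
  exact isClosed_iInter fun i => isClosed_le continuous_const (continuous_apply i)

lemma isClosed_fg_cone {H : Type*} [NormedAddCommGroup H] [NormedSpace ℝ H]
    {ι : Type*} [Fintype ι] [DecidableEq ι] (w : ι → H) :
    IsClosed {x : H | ∃ c : ι → ℝ, (∀ i, 0 ≤ c i) ∧ x = ∑ i, c i • w i} := by
  classical
  set D : Finset ι → Set H := fun S =>
    if LinearIndependent ℝ (fun i : S => w i.1) then
      combMap (fun i : S => w i.1) '' {c | ∀ i, 0 ≤ c i} else ∅ with hD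
  have hEq : {x : H | ∃ c : ι → ℝ, (∀ i, 0 ≤ c i) ∧ x = ∑ i, c i • w i} = ⋃ S, D S := by
    ext x
    simp only [Set.mem_setOf_eq, Set.mem_iUnion]
    constructor
    · rintro ⟨c, hc, rfl⟩
      obtain ⟨c', hc', hsum, hli⟩ := carath_cone w c hc
      refine ⟨Finset.univ.filter fun i => c' i ≠ 0, ?_⟩
      have hli' : LinearIndependent ℝ
          (fun i : (Finset.univ.filter fun i => c' i ≠ 0) => w i.1) := by
        have hf : ∀ i : (Finset.univ.filter fun i => c' i ≠ 0), c' i.1 ≠ 0 :=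
          fun i => (Finset.mem_filter.mp i.2).2
        exact hli.comp (fun i => ⟨i.1, hf i⟩) (fun a b hab => by
          injection hab with h; exact Subtype.ext h)
      rw [hD]; simp only [hli', if_true]
      refine ⟨fun i => c' i.1, fun i => hc' i.1, ?_⟩
      show ∑ i : (Finset.univ.filter fun i => c' i ≠ 0), c' i.1 • w i.1 = _
      rw [← hsum]
      rw [Finset.sum_coe_sort _ (fun i => c' i • w i)]
      refine Finset.sum_subset (Finset.filter_subset _ _) fun i _ hi => ?_
      simp only [Finset.mem_filter, Finset.mem_univ, true_and, not_not] at hi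
      simp [hi]
    · rintro ⟨S, hx⟩
      rw [hD] at hx
      by_cases hli : LinearIndependent ℝ (fun i : S => w i.1)
      · simp only [hli, if_true] at hx
        obtain ⟨c, hc, rfl⟩ := hx
        refine ⟨fun i => if h : i ∈ S then c ⟨i, h⟩ else 0, fun i => ?_, ?_⟩
        · by_cases h : i ∈ S
          · simpa [h] using hc ⟨i, h⟩
          · simp [h]
        · show (∑ i : S, c i • w i.1) = _
          have h1 : ∀ i : S, c i • w i.1
              = (if h : i.1 ∈ S then c ⟨i.1, h⟩ else 0) • w i.1 := fun i => by simp [i.2]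
          rw [Finset.sum_congr rfl fun i _ => h1 i,
            Finset.sum_coe_sort S (fun i => (if h : i ∈ S then c ⟨i, h⟩ else 0) • w i)]
          exact Finset.sum_subset (Finset.subset_univ S) fun i _ hi => by simp [hi]
      · simp [hli] at hx
  rw [hEq]
  apply isClosed_iUnion_of_finite
  intro S
  rw [hD]
  by_cases hli : LinearIndependent ℝ (fun i : S => w i.1)
  · simp only [hli, if_true]
    have hker : LinearMap.ker (combMap (fun i : S => w i.1)) = ⊥ := by
      rw [LinearMap.ker_eq_bot']
      intro m hm
      have := Fintype.linearIndependent_iff.mp hli m hm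
      funext i; exact this i
    exact ((combMap (fun i : S => w i.1)).isClosedEmbedding_of_injective hker).isClosedMap
      _ isClosed_nonneg_pi
  · simp [hli]


/-- **Farkas' lemma** (one variant): if every nonnegative solution `u` of `M u = 0`
satisfies `c ⬝ u ≤ 0`, then `c` is dominated by a linear combination of the rows of `M`. -/
lemma farkas_dominate {ι κ : Type*} [Fintype ι] [Fintype κ] [DecidableEq ι] [DecidableEq κ]
    (M : κ → ι → ℝ) (c : ι → ℝ)
    (h : ∀ u : ι → ℝ, (∀ k, 0 ≤ u k) → (∀ j, ∑ k, M j k * u k = 0) → ∑ k, c k * u k ≤ 0) :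
    ∃ μ : κ → ℝ, ∀ k, c k ≤ ∑ j, μ j * M j k := by
  classical
  set H := EuclideanSpace ℝ ι
  set e : (ι → ℝ) ≃ₗ[ℝ] H := (WithLp.linearEquiv 2 ℝ (ι → ℝ)).symm with he
  set W : (κ ⊕ κ ⊕ ι) → (ι → ℝ) := fun t =>
    Sum.elim (fun j => M j) (Sum.elim (fun j => -(M j))
      (fun k => fun k' => if k' = k then (-1 : ℝ) else 0)) t with hW
  set w : (κ ⊕ κ ⊕ ι) → H := fun t => e (W t) with hw
  set C : Set H := {x : H | ∃ a : (κ ⊕ κ ⊕ ι) → ℝ, (∀ t, 0 ≤ a t) ∧ x = ∑ t, a t • w t}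
    with hC
  -- inner products with generators
  have hinner : ∀ (aa : ι → ℝ) (y : H), (inner ℝ (e aa) y : ℝ) = ∑ k, aa k * (WithLp.equiv 2 (ι → ℝ) y) k := by
    intro aa y
    simp only [H, PiLp.inner_apply, RCLike.inner_apply, conj_trivial]
    exact Finset.sum_congr rfl fun k _ => mul_comm _ _
  by_cases hc : e c ∈ C
  · obtain ⟨a, ha, hsum⟩ := hc
    refine ⟨fun j => a (Sum.inl j) - a (Sum.inr (Sum.inl j)), fun k => ?_⟩
    have hsum' : c = ∑ t, a t • W t := by
      have := congrArg e.symm hsum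
      simpa [map_sum, map_smul, hw] using this
    have hck : c k = ∑ t, a t * W t k := by
      rw [hsum']
      simp [Finset.sum_apply]
    rw [hck, Fintype.sum_sum_type, Fintype.sum_sum_type]
    have h3 : ∑ k' : ι, a (Sum.inr (Sum.inr k')) * W (Sum.inr (Sum.inr k')) k
        = -(a (Sum.inr (Sum.inr k))) := by
      simp [hW, mul_ite, Finset.sum_ite_eq]
    rw [h3]
    have h1 : ∀ j, a (Sum.inl j) * W (Sum.inl j) k = a (Sum.inl j) * M j k := fun j => by
      simp [hW]
    have h2 : ∀ j, a (Sum.inr (Sum.inl j)) * W (Sum.inr (Sum.inl j)) k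
        = -(a (Sum.inr (Sum.inl j)) * M j k) := fun j => by simp [hW]
    rw [Finset.sum_congr rfl fun j _ => h1 j, Finset.sum_congr rfl fun j _ => h2 j]
    have h4 : ∑ j, (a (Sum.inl j) - a (Sum.inr (Sum.inl j))) * M j k
        = ∑ j, a (Sum.inl j) * M j k - ∑ j, a (Sum.inr (Sum.inl j)) * M j k := by
      rw [← Finset.sum_sub_distrib]; exact Finset.sum_congr rfl fun j _ => by ring
    rw [h4, Finset.sum_neg_distrib]
    have := ha (Sum.inr (Sum.inr k))
    linarith
  · exfalso
    set K : ConvexCone ℝ H :=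
      { carrier := C
        smul_mem' := by
          rintro r hr x ⟨a, ha, rfl⟩
          exact ⟨fun t => r * a t, fun t => mul_nonneg hr.le (ha t), by
            simp [Finset.smul_sum, mul_smul]⟩
        add_mem' := by
          rintro x ⟨a, ha, rfl⟩ y ⟨a', ha', rfl⟩
          exact ⟨fun t => a t + a' t, fun t => add_nonneg (ha t) (ha' t), by
            simp [add_smul, Finset.sum_add_distrib]⟩ } with hK
    have hKne : (K : Set H).Nonempty := ⟨0, ⟨0, fun t => le_rfl, by simp⟩⟩
    have hKclosed : IsClosed (K : Set H) := isClosed_fg_cone w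
    have hK0 : K.Pointed := ⟨0, fun t => le_rfl, by simp⟩
    set PC : ProperCone ℝ H := { toSubmodule := K.toPointedCone hK0, isClosed' := hKclosed }
    obtain ⟨y, hy, hyc⟩ := PC.hyperplane_separation' (x₀ := e c) hc
    replace hyc : inner ℝ y (e c) < 0 := by rwa [real_inner_comm]
    -- generators are in K
    have hgen : ∀ t, w t ∈ K := by
      intro t
      refine ⟨fun t' => if t' = t then 1 else 0, fun t' => by positivity, ?_⟩
      simp [ite_smul, Finset.sum_ite_eq']
    set Y : ι → ℝ := WithLp.equiv 2 (ι → ℝ) y with hY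
    have hrow : ∀ j, ∑ k, M j k * Y k = 0 := by
      intro j
      have h1 := hy _ (hgen (Sum.inl j))
      have h2 := hy _ (hgen (Sum.inr (Sum.inl j)))
      rw [hw, hinner] at h1 h2
      simp only [hW, Sum.elim_inl, Sum.elim_inr, Pi.neg_apply, neg_mul,
        Finset.sum_neg_distrib] at h1 h2
      linarith
    have hYle : ∀ k, Y k ≤ 0 := by
      intro k
      have h1 := hy _ (hgen (Sum.inr (Sum.inr k)))
      rw [hw, hinner] at h1
      simp only [hW, Sum.elim_inr, ite_mul, neg_mul, one_mul, zero_mul,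
        Finset.sum_ite_eq] at h1
      simp at h1
      exact h1
    have hpos : 0 < ∑ k, c k * (-(Y k)) := by
      have : (inner ℝ y (e c) : ℝ) = ∑ k, c k * Y k := by
        rw [real_inner_comm, hinner]
      rw [this] at hyc
      have : ∑ k, c k * (-(Y k)) = -(∑ k, c k * Y k) := by
        simp [Finset.sum_neg_distrib, mul_comm]
      rw [this]; linarith
    have := h (fun k => -(Y k)) (fun k => by simpa using hYle k)
      (fun j => by simpa [Finset.sum_neg_distrib] using congrArg Neg.neg (hrow j))
    linarith

/-- If the system `E x + F y = g`, `y ≥ 0` (with `y ∈ ℝ^r`) projects to a set `K`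
with `P = conv{v_1,…,v_n} ⊆ K ⊆ Q = {x : A x ≤ b}`, then the slack matrix
`S^{P,Q}(i,j) = b_i − A_i v_j` admits a nonnegative factorization of rank at most
`r + 1`; i.e. `nnegrk(S^{P,Q}) ≤ xc(P,Q) + 1`. -/
theorem nnegRank_slack_le_xc_succ {d m n r p : ℕ}
    (A : Matrix (Fin m) (Fin d) ℝ) (b : Fin m → ℝ) (v : Fin n → Fin d → ℝ)
    (E : Matrix (Fin p) (Fin d) ℝ) (F : Matrix (Fin p) (Fin r) ℝ) (g : Fin p → ℝ)
    (hPK : ∀ j, ∃ y : Fin r → ℝ, (∀ k, 0 ≤ y k) ∧ E.mulVec (v j) + F.mulVec y = g)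
    (hKQ : ∀ x : Fin d → ℝ,
      (∃ y : Fin r → ℝ, (∀ k, 0 ≤ y k) ∧ E.mulVec x + F.mulVec y = g) →
      ∀ i, A.mulVec x i ≤ b i) :
    nnegRank (Matrix.of fun i j => b i - A.mulVec (v j) i) ≤ r + 1 := by
  classical
  apply Nat.sInf_le
  rcases Nat.eq_zero_or_pos n with hn | hn
  · -- no columns: trivial factorization
    refine ⟨0, 0, fun i j => le_rfl, fun i j => le_rfl, ?_⟩
    ext i j
    exact absurd (j.2) (by omega)
  -- choose witnesses for the vertices
  choose yv hyvpos hyvfeas using hPK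
  -- the Farkas multipliers, one for each inequality
  have key : ∀ i : Fin m, ∃ μ : Fin p → ℝ,
      (∀ l, ∑ j, μ j * E j l = A i l) ∧ (∀ k, 0 ≤ ∑ j, μ j * F j k) ∧
      (∑ j, μ j * g j ≤ b i) := by
    intro i
    set M' : Fin p → ((Fin d ⊕ Fin d) ⊕ (Fin r ⊕ Unit)) → ℝ := fun j =>
      Sum.elim (Sum.elim (fun l => E j l) (fun l => -E j l))
        (Sum.elim (fun k => F j k) (fun _ => -g j)) with hM'
    set cv : ((Fin d ⊕ Fin d) ⊕ (Fin r ⊕ Unit)) → ℝ :=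
      Sum.elim (Sum.elim (fun l => A i l) (fun l => -(A i l)))
        (Sum.elim (fun _ => 0) (fun _ => -b i)) with hcv
    have hval : ∀ u : ((Fin d ⊕ Fin d) ⊕ (Fin r ⊕ Unit)) → ℝ, (∀ k, 0 ≤ u k) → (∀ j, ∑ k, M' j k * u k = 0) →
        ∑ k, cv k * u k ≤ 0 := by
      intro u hu hMu
      have hcon : ∀ j, (∑ l, E j l * u (Sum.inl (Sum.inl l)))
          - (∑ l, E j l * u (Sum.inl (Sum.inr l)))
          + (∑ k, F j k * u (Sum.inr (Sum.inl k)))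
          = g j * u (Sum.inr (Sum.inr ())) := by
        intro j
        have h0 := hMu j
        simp only [hM', Fintype.sum_sum_type, Sum.elim_inl, Sum.elim_inr, Finset.univ_unique,
          Finset.sum_singleton, neg_mul, Finset.sum_neg_distrib] at h0
        linarith [h0]
      set xx : Fin d → ℝ := fun l => u (Sum.inl (Sum.inl l)) - u (Sum.inl (Sum.inr l)) with hxx
      set yy : Fin r → ℝ := fun k => u (Sum.inr (Sum.inl k)) with hyy
      set t : ℝ := u (Sum.inr (Sum.inr ())) with htdef
      have hsplitE : ∀ j, E.mulVec xx j
          = (∑ l, E j l * u (Sum.inl (Sum.inl l))) - ∑ l, E j l * u (Sum.inl (Sum.inr l)) := by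
        intro j
        show ∑ l, E j l * xx l = _
        rw [← Finset.sum_sub_distrib]
        exact Finset.sum_congr rfl fun l _ => by rw [hxx]; ring
      have hFyy : ∀ j, F.mulVec yy j = ∑ k, F j k * u (Sum.inr (Sum.inl k)) := by
        intro j
        show ∑ k, F j k * yy k = _
        exact Finset.sum_congr rfl fun k _ => by rw [hyy]
      have hconstraint : ∀ j, E.mulVec xx j + F.mulVec yy j = t * g j := by
        intro j
        rw [hsplitE j, hFyy j, htdef]
        have := hcon j
        linarith
      have hobj : ∑ k, cv k * u k = A.mulVec xx i - t * b i := by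
        have hA : A.mulVec xx i
            = (∑ l, A i l * u (Sum.inl (Sum.inl l))) - ∑ l, A i l * u (Sum.inl (Sum.inr l)) := by
          show ∑ l, A i l * xx l = _
          rw [← Finset.sum_sub_distrib]
          exact Finset.sum_congr rfl fun l _ => by rw [hxx]; ring
        rw [hA, htdef]
        simp only [hcv, Fintype.sum_sum_type, Sum.elim_inl, Sum.elim_inr, Finset.univ_unique,
          Finset.sum_singleton, neg_mul, Finset.sum_neg_distrib, zero_mul,
          Finset.sum_const_zero]
        ring
      rw [hobj]
      have ht0 : 0 ≤ t := hu _
      rcases eq_or_lt_of_le ht0 with ht | ht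
      · -- t = 0 : recession direction
        have hrec : ∀ j, E.mulVec xx j + F.mulVec yy j = 0 := by
          intro j
          rw [hconstraint j, ← ht, zero_mul]
        have hxle : A.mulVec xx i ≤ 0 := by
          by_contra hpos
          push_neg at hpos
          set j0 : Fin n := ⟨0, hn⟩
          have hlamb : ∀ lam : ℝ, 0 ≤ lam →
              A.mulVec (v j0) i + lam * A.mulVec xx i ≤ b i := by
            intro lam hlam
            have hfeas' : E.mulVec (v j0 + lam • xx) + F.mulVec (yv j0 + lam • yy) = g := by
              funext j
              have h1j := congrFun (hyvfeas j0) j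
              have h2 := hrec j
              simp only [Matrix.mulVec_add, Matrix.mulVec_smul, Pi.add_apply, Pi.smul_apply,
                smul_eq_mul] at h1j ⊢
              have : lam * E.mulVec xx j + lam * F.mulVec yy j = 0 := by
                rw [← mul_add, h2, mul_zero]
              linarith
            have := hKQ (v j0 + lam • xx) ⟨yv j0 + lam • yy, fun k => by
              have h3 := hyvpos j0 k
              have h4 : 0 ≤ lam * yy k := mul_nonneg hlam (by rw [hyy]; exact hu _)
              simp only [Pi.add_apply, Pi.smul_apply, smul_eq_mul]
              linarith, hfeas'⟩ i
            simpa [Matrix.mulVec_add, Matrix.mulVec_smul] using this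
          have h0 := hlamb 0 le_rfl
          set lam := (b i - A.mulVec (v j0) i) / (A.mulVec xx i) + 1 with hlam
          have hlampos : 0 ≤ lam := by
            rw [hlam]
            have : 0 ≤ (b i - A.mulVec (v j0) i) / (A.mulVec xx i) :=
              div_nonneg (by linarith) hpos.le
            linarith
          have := hlamb lam hlampos
          rw [hlam, add_mul, div_mul_cancel₀ _ hpos.ne', one_mul] at this
          linarith
        rw [← ht]; linarith
      · -- t > 0 : rescale to a feasible point
        have hfeas' : E.mulVec (t⁻¹ • xx) + F.mulVec (t⁻¹ • yy) = g := by
          funext j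
          have h2 : t⁻¹ * (E.mulVec xx j + F.mulVec yy j) = t⁻¹ * (t * g j) := by
            rw [hconstraint j]
          rw [← mul_assoc, inv_mul_cancel₀ ht.ne', one_mul] at h2
          simp only [Matrix.mulVec_smul, Pi.add_apply, Pi.smul_apply, smul_eq_mul]
          linarith
        have := hKQ (t⁻¹ • xx) ⟨t⁻¹ • yy, fun k => by
          simp only [Pi.smul_apply, smul_eq_mul]
          exact mul_nonneg (inv_nonneg.mpr ht0) (by rw [hyy]; exact hu _), hfeas'⟩ i
        rw [Matrix.mulVec_smul] at this
        simp only [Pi.smul_apply, smul_eq_mul] at this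
        have h2 := mul_le_mul_of_nonneg_left this ht.le
        rw [← mul_assoc, mul_inv_cancel₀ ht.ne', one_mul] at h2
        linarith
    obtain ⟨μ, hμ⟩ := farkas_dominate M' cv hval
    refine ⟨μ, fun l => ?_, fun k => ?_, ?_⟩
    · have h1 := hμ (Sum.inl (Sum.inl l))
      have h2 := hμ (Sum.inl (Sum.inr l))
      simp only [hM', hcv, Sum.elim_inl, Sum.elim_inr, mul_neg,
        Finset.sum_neg_distrib, neg_le_neg_iff] at h1 h2
      linarith
    · have h1 := hμ (Sum.inr (Sum.inl k))
      simpa [hM', hcv] using h1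
    · have h1 := hμ (Sum.inr (Sum.inr ()))
      simp only [hM', hcv, Sum.elim_inr, mul_neg, Finset.sum_neg_distrib,
        neg_le_neg_iff] at h1
      linarith
  choose μ hμE hμF hμg using key
  refine ⟨Matrix.of fun i k => (Fin.lastCases (b i - ∑ j, μ i j * g j)
      (fun k' => ∑ j, μ i j * F j k') k : ℝ),
    Matrix.of fun k j => (Fin.lastCases 1 (fun k' => yv j k') k : ℝ), ?_, ?_, ?_⟩
  · intro i k
    refine Fin.lastCases ?_ (fun k' => ?_) k
    · simp only [Matrix.of_apply, Fin.lastCases_last]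
      have := hμg i
      linarith
    · simp only [Matrix.of_apply, Fin.lastCases_castSucc]
      exact hμF i k'
  · intro k j
    refine Fin.lastCases ?_ (fun k' => ?_) k
    · simp only [Matrix.of_apply, Fin.lastCases_last]
      exact zero_le_one
    · simp only [Matrix.of_apply, Fin.lastCases_castSucc]
      exact hyvpos j k'
  · ext i j
    rw [Matrix.mul_apply, Fin.sum_univ_castSucc]
    simp only [Matrix.of_apply, Fin.lastCases_last, Fin.lastCases_castSucc, mul_one]
    have hE : ∑ j' : Fin p, μ i j' * E.mulVec (v j) j' = A.mulVec (v j) i := by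
      have h1 : ∀ j' : Fin p, μ i j' * E.mulVec (v j) j'
          = ∑ l, μ i j' * (E j' l * v j l) := fun j' => by
        rw [← Finset.mul_sum]; rfl
      rw [Finset.sum_congr rfl fun j' _ => h1 j', Finset.sum_comm]
      have h2 : ∀ l, ∑ j' : Fin p, μ i j' * (E j' l * v j l)
          = (∑ j' : Fin p, μ i j' * E j' l) * v j l := fun l => by
        rw [Finset.sum_mul]
        exact Finset.sum_congr rfl fun j' _ => by ring
      rw [Finset.sum_congr rfl fun l _ => h2 l]
      show ∑ l, (∑ j' : Fin p, μ i j' * E j' l) * v j l = ∑ l, A i l * v j l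
      exact Finset.sum_congr rfl fun l _ => by rw [hμE i l]
    have hF : ∑ j' : Fin p, μ i j' * F.mulVec (yv j) j'
        = ∑ k', (∑ j' : Fin p, μ i j' * F j' k') * yv j k' := by
      have h1 : ∀ j' : Fin p, μ i j' * F.mulVec (yv j) j'
          = ∑ k', μ i j' * (F j' k' * yv j k') := fun j' => by
        rw [← Finset.mul_sum]; rfl
      rw [Finset.sum_congr rfl fun j' _ => h1 j', Finset.sum_comm]
      refine Finset.sum_congr rfl fun k' _ => ?_
      rw [Finset.sum_mul]
      exact Finset.sum_congr rfl fun j' _ => by ring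
    have hg2 : ∑ j' : Fin p, μ i j' * g j'
        = A.mulVec (v j) i + ∑ k', (∑ j' : Fin p, μ i j' * F j' k') * yv j k' := by
      have hfeas := hyvfeas j
      have h1 : ∀ j' : Fin p, μ i j' * g j'
          = μ i j' * E.mulVec (v j) j' + μ i j' * F.mulVec (yv j) j' := fun j' => by
        have := congrFun hfeas j'
        simp only [Pi.add_apply] at this
        rw [← this]; ring
      rw [Finset.sum_congr rfl fun j' _ => h1 j', Finset.sum_add_distrib, hE, hF]
    rw [hg2]
    ring
end

section
/- Suppose for some constants c > 0 and C, for every nonnegative rank-1 matrix X on index set (A ∪ B) the corruption bound (1−ε)·E[X | A] − E[X | B] ≤ ‖X‖_∞ · 2^{−cε²ℓ + C log ℓ} holds. If M is a nonnegative matrix with E[M | A] = ρ, E[M | B] = ρ − 1, and ‖M restricted to A ∪ B‖_∞ ≤ ρ, then the nonnegative rank r of M satisfies r ≥ (1/ρ − ε) · 2^{cε²ℓ − C log ℓ}. -/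
/-- The average of `X` over a finite index set `A` (expectation under the uniform
distribution on `A`). -/
noncomputable def avgOn {γ : Type*} (A : Finset γ) (X : γ → ℝ) : ℝ :=
  (∑ p ∈ A, X p) / A.card

lemma avgOn_sum {γ : Type*} (A : Finset γ) {n : ℕ} (X : Fin n → γ → ℝ) :
    avgOn A (fun p => ∑ k, X k p) = ∑ k, avgOn A (X k) := by
  simp only [avgOn, Finset.sum_div]
  rw [Finset.sum_comm]

/-- Suppose that for every nonnegative rank-1 matrix `X = u ⊗ w` on the index set
`A ∪ B` the corruption bound
`(1−ε)·E[X | A] − E[X | B] ≤ ‖X‖_∞ · 2^{−cε²ℓ + C log ℓ}` holds. If `M` is a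
nonnegative matrix, written as a sum of `r` nonnegative rank-1 matrices, with
`E[M | A] = ρ`, `E[M | B] = ρ − 1` and `‖M restricted to A ∪ B‖_∞ ≤ ρ`, then
`r ≥ (1/ρ − ε) · 2^{cε²ℓ − C log ℓ}`. -/
theorem nnegRank_lower_bound_from_corruption {α β : Type*} [Fintype α] [Fintype β] [DecidableEq α] [DecidableEq β]
    (A B : Finset (α × β)) (hdisj : Disjoint A B) (hA : A.Nonempty) (hB : B.Nonempty)
    (c C ℓ ε ρ : ℝ) (hc : 0 < c) (hε : 0 < ε) (hρ : 0 < ρ)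
    (hcor : ∀ (u : α → ℝ) (w : β → ℝ), (∀ x, 0 ≤ u x) → (∀ y, 0 ≤ w y) →
      ∀ N : ℝ, (∀ p ∈ A ∪ B, u p.1 * w p.2 ≤ N) →
      (1 - ε) * avgOn A (fun p => u p.1 * w p.2) - avgOn B (fun p => u p.1 * w p.2)
        ≤ N * (2:ℝ) ^ (-(c * ε ^ 2 * ℓ) + C * Real.logb 2 ℓ))
    (r : ℕ) (f : Fin r → α → ℝ) (g : Fin r → β → ℝ)
    (hf : ∀ k x, 0 ≤ f k x) (hg : ∀ k y, 0 ≤ g k y)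
    (M : α × β → ℝ) (hM : ∀ p, M p = ∑ k, f k p.1 * g k p.2)
    (hMA : avgOn A M = ρ) (hMB : avgOn B M = ρ - 1)
    (hMmax : ∀ p ∈ A ∪ B, M p ≤ ρ) :
    (1 / ρ - ε) * (2:ℝ) ^ (c * ε ^ 2 * ℓ - C * Real.logb 2 ℓ) ≤ r := by
  set t : ℝ := c * ε ^ 2 * ℓ - C * Real.logb 2 ℓ with ht
  -- each rank-1 term is bounded by ρ on A ∪ B
  have hterm : ∀ (k : Fin r) p, p ∈ A ∪ B → f k p.1 * g k p.2 ≤ ρ := by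
    intro k p hp
    have h1 : f k p.1 * g k p.2 ≤ M p := by
      rw [hM p]
      exact Finset.single_le_sum (fun j _ => mul_nonneg (hf j _) (hg j _))
        (Finset.mem_univ k)
    exact h1.trans (hMmax p hp)
  -- sum the corruption bounds
  have hkey : (1 - ε) * ρ - (ρ - 1) ≤ (r : ℝ) * (ρ * (2:ℝ) ^ (-t)) := by
    have h1 : ∀ k : Fin r,
        (1 - ε) * avgOn A (fun p => f k p.1 * g k p.2)
          - avgOn B (fun p => f k p.1 * g k p.2)
          ≤ ρ * (2:ℝ) ^ (-t) := by
      intro k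
      have := hcor (f k) (g k) (hf k) (hg k) ρ (hterm k)
      have he : -(c * ε ^ 2 * ℓ) + C * Real.logb 2 ℓ = -t := by ring
      rwa [he] at this
    have hsum := Finset.sum_le_sum (fun k (_ : k ∈ Finset.univ) => h1 k)
    have hAeq : avgOn A M = ∑ k, avgOn A (fun p => f k p.1 * g k p.2) := by
      rw [show M = fun p => ∑ k, f k p.1 * g k p.2 from funext hM]
      exact avgOn_sum A _
    have hBeq : avgOn B M = ∑ k, avgOn B (fun p => f k p.1 * g k p.2) := by
      rw [show M = fun p => ∑ k, f k p.1 * g k p.2 from funext hM]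
      exact avgOn_sum B _
    calc (1 - ε) * ρ - (ρ - 1)
        = (1 - ε) * avgOn A M - avgOn B M := by rw [hMA, hMB]
      _ = ∑ k : Fin r, ((1 - ε) * avgOn A (fun p => f k p.1 * g k p.2)
            - avgOn B (fun p => f k p.1 * g k p.2)) := by
          rw [hAeq, hBeq, Finset.mul_sum, Finset.sum_sub_distrib]
      _ ≤ ∑ k : Fin r, ρ * (2:ℝ) ^ (-t) := hsum
      _ = (r : ℝ) * (ρ * (2:ℝ) ^ (-t)) := by simp [Finset.sum_const, mul_comm]
  have hpos : (0:ℝ) < (2:ℝ) ^ t := Real.rpow_pos_of_pos (by norm_num) t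
  have hneg : (2:ℝ) ^ (-t) = ((2:ℝ) ^ t)⁻¹ := Real.rpow_neg (by norm_num) t
  rw [hneg] at hkey
  have h2 : 1 - ε * ρ ≤ (r : ℝ) * ρ * ((2:ℝ) ^ t)⁻¹ := by linarith [hkey]
  have h3 : (1 - ε * ρ) * (2:ℝ) ^ t ≤ (r : ℝ) * ρ := by
    have := mul_le_mul_of_nonneg_right h2 hpos.le
    rwa [mul_assoc, inv_mul_cancel₀ hpos.ne', mul_one] at this
  rw [div_sub' hρ.ne', div_mul_eq_mul_div, div_le_iff₀ hρ]
  calc (1 - ρ * ε) * (2:ℝ) ^ t = (1 - ε * ρ) * (2:ℝ) ^ t := by ring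
    _ ≤ (r:ℝ) * ρ := h3
end

section
/- For every graph G on vertex set contained in [n] and every b ∈ {0,1}^n, ⟨w^G, b·bᵀ⟩ ≤ ω(G), with equality attained when b is the characteristic vector of a maximum clique of G. Hence max over x ∈ COR(n) of ⟨w^G, x⟩ equals the clique number ω(G). -/
open Classical in
/-- The weight matrix `w^G` of a graph `G` with vertex set `V ⊆ [n]`. -/
noncomputable def wG (n : ℕ) (V : Finset (Fin n)) (G : SimpleGraph (Fin n)) :
    Matrix (Fin n) (Fin n) ℝ := fun i j =>
  if i = j then (if i ∈ V then 1 else 0)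
  else if i ∈ V ∧ j ∈ V ∧ ¬G.Adj i j then -1 else 0

/-- The clique number of `G` restricted to the vertex set `V`. -/
noncomputable def cliqueNum (n : ℕ) (V : Finset (Fin n)) (G : SimpleGraph (Fin n)) : ℕ :=
  sSup {k : ℕ | ∃ s : Finset (Fin n), ↑s ⊆ (V : Set (Fin n)) ∧ G.IsClique ↑s ∧ s.card = k}

/-- The correlation polytope `COR(n) = conv{b·bᵀ : b ∈ {0,1}ⁿ}`. -/
noncomputable def corPolytope (n : ℕ) : Set (Matrix (Fin n) (Fin n) ℝ) :=
  convexHull ℝ {x | ∃ b : Fin n → Bool, x = Matrix.vecMulVec (bvec b) (bvec b)}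

section Aux
variable {n : ℕ} {V : Finset (Fin n)} {G : SimpleGraph (Fin n)}

lemma wG_zero_left {i j : Fin n} (h : i ∉ V) : wG n V G i j = 0 := by
  unfold wG; by_cases hij : i = j <;> simp [hij, h] <;> subst hij <;> simp [h]

lemma wG_zero_right {i j : Fin n} (h : j ∉ V) : wG n V G i j = 0 := by
  unfold wG; by_cases hij : i = j
  · subst hij; simp [h]
  · simp [hij, h]

lemma wG_diag {i : Fin n} (h : i ∈ V) : wG n V G i i = 1 := by simp [wG, h]

lemma wG_offdiag_nonpos {i j : Fin n} (h : i ≠ j) : wG n V G i j ≤ 0 := by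
  unfold wG; rw [if_neg h]; split_ifs <;> norm_num

lemma wG_nonadj {i j : Fin n} (h : i ≠ j) (hi : i ∈ V) (hj : j ∈ V)
    (hn : ¬G.Adj i j) : wG n V G i j = -1 := by
  simp [wG, h, hi, hj, hn]

lemma wG_adj {i j : Fin n} (h : i ≠ j) (ha : G.Adj i j) : wG n V G i j = 0 := by
  simp [wG, h, ha]

lemma cliqueNum_bddAbove :
    BddAbove {k : ℕ | ∃ s : Finset (Fin n), ↑s ⊆ (V : Set (Fin n)) ∧ G.IsClique ↑s ∧ s.card = k} := by
  refine ⟨n, ?_⟩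
  rintro k ⟨s, -, -, rfl⟩
  simpa using Finset.card_le_univ s

lemma card_le_cliqueNum {S : Finset (Fin n)} (hSV : ↑S ⊆ (V : Set (Fin n)))
    (hc : G.IsClique ↑S) : S.card ≤ cliqueNum n V G :=
  le_csSup cliqueNum_bddAbove ⟨S, hSV, hc, rfl⟩

lemma g_clique {S : Finset (Fin n)} (hSV : ↑S ⊆ (V : Set (Fin n)))
    (hc : G.IsClique ↑S) :
    ∑ i ∈ S, ∑ j ∈ S, wG n V G i j = (S.card : ℝ) := by
  have h1 : ∀ i ∈ S, ∑ j ∈ S, wG n V G i j = 1 := by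
    intro i hi
    rw [← Finset.sum_erase_add _ _ hi, wG_diag (hSV hi)]
    have h2 : ∑ j ∈ S.erase i, wG n V G i j = 0 := by
      refine Finset.sum_eq_zero fun j hj => ?_
      have hji : j ≠ i := Finset.ne_of_mem_erase hj
      have hjS : j ∈ S := Finset.mem_of_mem_erase hj
      exact wG_adj hji.symm (hc (Finset.mem_coe.mpr hi) (Finset.mem_coe.mpr hjS) hji.symm)
    rw [h2, zero_add]
  rw [Finset.sum_congr rfl h1]
  simp

lemma g_le (hG : ∀ i j, G.Adj i j → i ∈ V ∧ j ∈ V) :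
    ∀ S : Finset (Fin n), ↑S ⊆ (V : Set (Fin n)) →
      ∑ i ∈ S, ∑ j ∈ S, wG n V G i j ≤ (cliqueNum n V G : ℝ) := by
  intro S
  induction S using Finset.strongInduction with
  | _ S ih =>
    intro hSV
    by_cases hc : G.IsClique (↑S : Set (Fin n))
    · rw [g_clique hSV hc]
      exact_mod_cast card_le_cliqueNum hSV hc
    · rw [SimpleGraph.isClique_iff, Set.Pairwise] at hc
      push_neg at hc
      obtain ⟨u, hu, v, hv, hne, hnadj⟩ := hc
      have huS : u ∈ S := Finset.mem_coe.mp hu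
      have hvS : v ∈ S := Finset.mem_coe.mp hv
      set S' := S.erase v with hS'def
      have split : ∀ f : Fin n → ℝ, ∑ i ∈ S, f i = ∑ i ∈ S', f i + f v :=
        fun f => (Finset.sum_erase_add S f hvS).symm
      have e1 : ∑ i ∈ S, ∑ j ∈ S, wG n V G i j
          = (∑ i ∈ S', ∑ j ∈ S', wG n V G i j) + (∑ i ∈ S', wG n V G i v)
            + (∑ j ∈ S', wG n V G v j) + wG n V G v v := by
        rw [split fun i => ∑ j ∈ S, wG n V G i j, split (wG n V G v)]
        rw [Finset.sum_congr rfl fun i _ => split (wG n V G i), Finset.sum_add_distrib]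
        ring
      have huV : u ∈ V := hSV hu
      have hvV : v ∈ V := hSV hv
      have huS' : u ∈ S' := Finset.mem_erase.mpr ⟨hne, huS⟩
      have hA : ∑ i ∈ S', wG n V G i v ≤ -1 := by
        rw [← Finset.sum_erase_add _ _ huS', wG_nonadj hne huV hvV hnadj]
        have : ∑ i ∈ S'.erase u, wG n V G i v ≤ 0 :=
          Finset.sum_nonpos fun i hi =>
            wG_offdiag_nonpos (Finset.ne_of_mem_erase (Finset.mem_of_mem_erase hi))
        linarith
      have hB : ∑ j ∈ S', wG n V G v j ≤ -1 := by
        rw [← Finset.sum_erase_add _ _ huS',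
          wG_nonadj hne.symm hvV huV (fun h => hnadj h.symm)]
        have : ∑ j ∈ S'.erase u, wG n V G v j ≤ 0 :=
          Finset.sum_nonpos fun j hj =>
            wG_offdiag_nonpos
              (Ne.symm (Finset.ne_of_mem_erase (Finset.mem_of_mem_erase hj)))
        linarith
      have hdiag : wG n V G v v = 1 := wG_diag hvV
      have hIH : ∑ i ∈ S', ∑ j ∈ S', wG n V G i j ≤ (cliqueNum n V G : ℝ) :=
        ih S' (Finset.erase_ssubset hvS)
          (fun x hx => hSV (Finset.mem_coe.mpr (Finset.mem_of_mem_erase (Finset.mem_coe.mp hx))))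
      rw [e1]
      linarith

lemma g_restrict (X : Finset (Fin n)) :
    ∑ i ∈ X, ∑ j ∈ X, wG n V G i j = ∑ i ∈ X ∩ V, ∑ j ∈ X ∩ V, wG n V G i j := by
  have inner : ∀ i : Fin n, ∑ j ∈ X ∩ V, wG n V G i j = ∑ j ∈ X, wG n V G i j :=
    fun i => Finset.sum_subset Finset.inter_subset_left
      (fun j hj hj' => wG_zero_right fun hV => hj' (Finset.mem_inter.mpr ⟨hj, hV⟩))
  have outer : ∑ i ∈ X ∩ V, ∑ j ∈ X, wG n V G i j = ∑ i ∈ X, ∑ j ∈ X, wG n V G i j :=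
    Finset.sum_subset Finset.inter_subset_left
      (fun i hi hi' => Finset.sum_eq_zero fun j _ =>
        wG_zero_left fun hV => hi' (Finset.mem_inter.mpr ⟨hi, hV⟩))
  rw [← outer]
  exact Finset.sum_congr rfl fun i _ => (inner i).symm
end Aux

section Aux2
variable {n : ℕ} {V : Finset (Fin n)} {G : SimpleGraph (Fin n)}

open Classical in
lemma key_rewrite (b : Fin n → Bool) :
    ∑ i, ∑ j, wG n V G i j * Matrix.vecMulVec (bvec b) (bvec b) i j
      = ∑ i ∈ Finset.univ.filter (fun i => b i = true),
          ∑ j ∈ Finset.univ.filter (fun j => b j = true), wG n V G i j := by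
  simp_rw [Finset.sum_filter]
  refine Finset.sum_congr rfl fun i _ => ?_
  by_cases hi : b i = true
  · rw [if_pos hi]
    refine Finset.sum_congr rfl fun j _ => ?_
    by_cases hj : b j = true
    · rw [if_pos hj]; simp [Matrix.vecMulVec_apply, bvec, hi, hj]
    · rw [if_neg hj]; simp [Matrix.vecMulVec_apply, bvec, hj]
  · rw [if_neg hi]
    exact Finset.sum_eq_zero fun j _ => by simp [Matrix.vecMulVec_apply, bvec, hi]
end Aux2

/-- For every graph `G` on a vertex set contained in `[n]` and every `b ∈ {0,1}ⁿ`,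
`⟨w^G, b·bᵀ⟩ ≤ ω(G)`, with equality attained for the characteristic vector of a
maximum clique; hence the maximum of `⟨w^G, x⟩` over the correlation polytope
`COR(n)` equals the clique number `ω(G)`. -/
theorem max_wG_over_cor_eq_cliqueNum (n : ℕ) (V : Finset (Fin n)) (G : SimpleGraph (Fin n))
    (hG : ∀ i j, G.Adj i j → i ∈ V ∧ j ∈ V) :
    (∀ b : Fin n → Bool,
      ∑ i, ∑ j, wG n V G i j * Matrix.vecMulVec (bvec b) (bvec b) i j
        ≤ (cliqueNum n V G : ℝ)) ∧
    (∃ b : Fin n → Bool,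
      ∑ i, ∑ j, wG n V G i j * Matrix.vecMulVec (bvec b) (bvec b) i j
        = (cliqueNum n V G : ℝ)) ∧
    IsGreatest {t : ℝ | ∃ x ∈ corPolytope n, t = ∑ i, ∑ j, wG n V G i j * x i j}
      (cliqueNum n V G : ℝ) := by
  classical
  -- Part 1: upper bound for every boolean vector
  have part1 : ∀ b : Fin n → Bool,
      ∑ i, ∑ j, wG n V G i j * Matrix.vecMulVec (bvec b) (bvec b) i j
        ≤ (cliqueNum n V G : ℝ) := by
    intro b
    rw [key_rewrite b, g_restrict]
    refine g_le hG _ ?_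
    intro x hx
    have := Finset.mem_coe.mp hx
    exact (Finset.mem_inter.mp this).2
  -- Part 2: equality attained
  have hSne : {k : ℕ | ∃ s : Finset (Fin n), ↑s ⊆ (V : Set (Fin n)) ∧ G.IsClique ↑s ∧ s.card = k}.Nonempty :=
    ⟨0, ∅, by simp, by simp, rfl⟩
  have hmem := Nat.sSup_mem hSne (cliqueNum_bddAbove (V := V) (G := G))
  obtain ⟨s, hsV, hscl, hscard⟩ := hmem
  set b₀ : Fin n → Bool := fun i => decide (i ∈ s) with hb₀
  have hfilter : Finset.univ.filter (fun i => b₀ i = true) = s := by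
    ext i; simp [hb₀]
  have part2eq : ∑ i, ∑ j, wG n V G i j * Matrix.vecMulVec (bvec b₀) (bvec b₀) i j
      = (cliqueNum n V G : ℝ) := by
    rw [key_rewrite b₀, hfilter, g_clique hsV hscl, hscard]; rfl
  refine ⟨part1, ⟨b₀, part2eq⟩, ?_, ?_⟩
  · exact ⟨Matrix.vecMulVec (bvec b₀) (bvec b₀),
      subset_convexHull ℝ _ ⟨b₀, rfl⟩, part2eq.symm⟩
  · rintro t ⟨x, hx, rfl⟩
    have hL : IsLinearMap ℝ
        (fun x : Matrix (Fin n) (Fin n) ℝ => ∑ i, ∑ j, wG n V G i j * x i j) := by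
      constructor
      · intro x y
        simp [Matrix.add_apply, mul_add, Finset.sum_add_distrib]
      · intro c x
        simp only [Matrix.smul_apply, smul_eq_mul, Finset.mul_sum]
        refine Finset.sum_congr rfl fun i _ => Finset.sum_congr rfl fun j _ => by ring
    have hsub : corPolytope n ⊆
        {x | ∑ i, ∑ j, wG n V G i j * x i j ≤ (cliqueNum n V G : ℝ)} := by
      refine convexHull_min ?_ (convex_halfSpace_le hL _)
      rintro y ⟨b, rfl⟩
      exact part1 b
    exact hsub hx
end

section
/- Let ρ ≥ 1 and let Q = {x ∈ ℝ^{n×n} : ⟨2·diag(a) − a·aᵀ, x⟩ ≤ 1 for all a ∈ {0,1}^n}. If S ⊆ Q and x lies in the closed (ρ−1)-neighborhood of S in the ℓ₁-norm on ℝ^{n×n}, then x ∈ ρQ. In other words, S^{ρ−1} ⊆ ρQ. -/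
/-- The matrix `2·diag(a) − a·aᵀ` for `a ∈ {0,1}ⁿ`. -/
noncomputable def qMat {n : ℕ} (a : Fin n → Bool) : Matrix (Fin n) (Fin n) ℝ :=
  (2:ℝ) • Matrix.diagonal (bvec a) - Matrix.vecMulVec (bvec a) (bvec a)

lemma qMat_abs_le_one {n : ℕ} (a : Fin n → Bool) (i j : Fin n) : |qMat a i j| ≤ 1 := by
  simp only [qMat, Matrix.sub_apply, Matrix.smul_apply, Matrix.diagonal_apply,
    Matrix.vecMulVec_apply, bvec, smul_eq_mul]
  by_cases hij : i = j <;> by_cases hi : a i <;> by_cases hj : a j <;>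
    simp_all <;> norm_num

/-- Let `ρ ≥ 1` and `Q = {x : ⟨2·diag(a) − a·aᵀ, x⟩ ≤ 1 for all a ∈ {0,1}ⁿ}`.
If `S ⊆ Q` and `x` lies in the closed `(ρ−1)`-neighborhood of `S` in the entrywise
`ℓ₁`-norm, then `x ∈ ρQ`, i.e. `⟨2·diag(a) − a·aᵀ, x⟩ ≤ ρ` for all `a`. -/
theorem neighborhood_subset_dilate (n : ℕ) (ρ : ℝ) (hρ : 1 ≤ ρ)
    (S : Set (Matrix (Fin n) (Fin n) ℝ))
    (hSQ : ∀ x₀ ∈ S, ∀ a : Fin n → Bool, ∑ i, ∑ j, qMat a i j * x₀ i j ≤ 1)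
    (x : Matrix (Fin n) (Fin n) ℝ)
    (hx : ∃ x₀ ∈ S, ∑ i, ∑ j, |x i j - x₀ i j| ≤ ρ - 1) :
    ∀ a : Fin n → Bool, ∑ i, ∑ j, qMat a i j * x i j ≤ ρ := by
  obtain ⟨x₀, hx₀S, hx₀⟩ := hx
  intro a
  have key : ∑ i, ∑ j, qMat a i j * x i j
      = (∑ i, ∑ j, qMat a i j * x₀ i j) + ∑ i, ∑ j, qMat a i j * (x i j - x₀ i j) := by
    rw [← Finset.sum_add_distrib]
    congr 1; ext i
    rw [← Finset.sum_add_distrib]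
    congr 1; ext j; ring
  rw [key]
  have h1 := hSQ x₀ hx₀S a
  have h2 : ∑ i, ∑ j, qMat a i j * (x i j - x₀ i j) ≤ ∑ i, ∑ j, |x i j - x₀ i j| := by
    refine Finset.sum_le_sum fun i _ => Finset.sum_le_sum fun j _ => ?_
    calc qMat a i j * (x i j - x₀ i j) ≤ |qMat a i j * (x i j - x₀ i j)| := le_abs_self _
      _ = |qMat a i j| * |x i j - x₀ i j| := abs_mul _ _
      _ ≤ 1 * |x i j - x₀ i j| :=
        mul_le_mul_of_nonneg_right (qMat_abs_le_one a i j) (abs_nonneg _)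
      _ = |x i j - x₀ i j| := one_mul _
  linarith
end

section
/- Let n ≡ 3 (mod 4), ℓ = (n+1)/4, and let T = (T₁, T₂, {i}) be a uniformly random partition of [n] into sets of sizes 2ℓ−1, 2ℓ−1, 1. Conditioned on T, let a be a uniform ℓ-subset of T₁ ∪ {i} and b an independent uniform ℓ-subset of T₂ ∪ {i}. Then P(i ∈ a and i ∈ b) = 1/4, and conditioned on this event (resp. its complement), (a,b) is uniform on the set B of pairs of ℓ-subsets intersecting in exactly one element (resp. uniform on the set A of disjoint pairs of ℓ-subsets). -/
open Finset in
/-- Any two pairs of finsets with the same "intersection pattern" are related by a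
permutation of the ambient finite type. -/
lemma exists_perm_maps {α : Type*} [DecidableEq α] [Fintype α] (x y x' y' : Finset α)
    (hx : x.card = x'.card) (hy : y.card = y'.card)
    (hxy : (x ∩ y).card = (x' ∩ y').card) :
    ∃ σ : Equiv.Perm α, x.image σ = x' ∧ y.image σ = y' := by
  have h1 : (x ∩ y).card = (x' ∩ y').card := hxy
  have h2 : (x \ y).card = (x' \ y').card := by
    have := card_inter_add_card_sdiff x y
    have := card_inter_add_card_sdiff x' y'
    omega
  have h3 : (y \ x).card = (y' \ x').card := by
    have := card_inter_add_card_sdiff y x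
    have := card_inter_add_card_sdiff y' x'
    rw [inter_comm] at h1
    rw [inter_comm x' y'] at h1
    omega
  have h4 : ((x ∪ y)ᶜ).card = ((x' ∪ y')ᶜ).card := by
    have := card_inter_add_card_union x y
    have := card_inter_add_card_union x' y'
    rw [card_compl, card_compl]
    omega
  let e1 := Finset.equivOfCardEq h1
  let e2 := Finset.equivOfCardEq h2
  let e3 := Finset.equivOfCardEq h3
  let e4 := Finset.equivOfCardEq h4
  have key : ∀ a : α, a ∉ x ∩ y → a ∉ x \ y → a ∉ y \ x → a ∈ (x ∪ y)ᶜ := by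
    intro a; simp only [mem_inter, mem_sdiff, mem_compl, mem_union]; tauto
  have key' : ∀ a : α, a ∉ x' ∩ y' → a ∉ x' \ y' → a ∉ y' \ x' → a ∈ (x' ∪ y')ᶜ := by
    intro a; simp only [mem_inter, mem_sdiff, mem_compl, mem_union]; tauto
  let f : α → α := fun a =>
    if h : a ∈ x ∩ y then e1 ⟨a, h⟩
    else if h2' : a ∈ x \ y then e2 ⟨a, h2'⟩
    else if h3' : a ∈ y \ x then e3 ⟨a, h3'⟩
    else e4 ⟨a, key a h h2' h3'⟩
  let g : α → α := fun a =>
    if h : a ∈ x' ∩ y' then e1.symm ⟨a, h⟩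
    else if h2' : a ∈ x' \ y' then e2.symm ⟨a, h2'⟩
    else if h3' : a ∈ y' \ x' then e3.symm ⟨a, h3'⟩
    else e4.symm ⟨a, key' a h h2' h3'⟩
  have d12 : ∀ b : α, b ∈ x' \ y' → b ∉ x' ∩ y' := by
    simp (config := {contextual := true}) [mem_sdiff, mem_inter]
  have d13 : ∀ b : α, b ∈ y' \ x' → b ∉ x' ∩ y' := by
    simp (config := {contextual := true}) [mem_sdiff, mem_inter]
  have d23 : ∀ b : α, b ∈ y' \ x' → b ∉ x' \ y' := by
    simp (config := {contextual := true}) [mem_sdiff]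
  have d4 : ∀ b : α, b ∈ (x' ∪ y')ᶜ → b ∉ x' ∩ y' ∧ b ∉ x' \ y' ∧ b ∉ y' \ x' := by
    intro b; simp only [mem_compl, mem_union, mem_inter, mem_sdiff]; tauto
  have d12' : ∀ b : α, b ∈ x \ y → b ∉ x ∩ y := by
    simp (config := {contextual := true}) [mem_sdiff, mem_inter]
  have d13' : ∀ b : α, b ∈ y \ x → b ∉ x ∩ y := by
    simp (config := {contextual := true}) [mem_sdiff, mem_inter]
  have d23' : ∀ b : α, b ∈ y \ x → b ∉ x \ y := by
    simp (config := {contextual := true}) [mem_sdiff]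
  have d4' : ∀ b : α, b ∈ (x ∪ y)ᶜ → b ∉ x ∩ y ∧ b ∉ x \ y ∧ b ∉ y \ x := by
    intro b; simp only [mem_compl, mem_union, mem_inter, mem_sdiff]; tauto
  have left : Function.LeftInverse g f := by
    intro a
    by_cases h1' : a ∈ x ∩ y
    · have hf : f a = e1 ⟨a, h1'⟩ := dif_pos h1'
      have hm : (e1 ⟨a, h1'⟩ : α) ∈ x' ∩ y' := (e1 ⟨a, h1'⟩).2
      simp only [g, hf, dif_pos hm]
      simp [Subtype.coe_eta]
    · by_cases h2' : a ∈ x \ y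
      · have hf : f a = e2 ⟨a, h2'⟩ := by simp only [f, dif_neg h1', dif_pos h2']
        have hm : (e2 ⟨a, h2'⟩ : α) ∈ x' \ y' := (e2 ⟨a, h2'⟩).2
        simp only [g, hf, dif_neg (d12 _ hm), dif_pos hm]
        simp [Subtype.coe_eta]
      · by_cases h3' : a ∈ y \ x
        · have hf : f a = e3 ⟨a, h3'⟩ := by simp only [f, dif_neg h1', dif_neg h2', dif_pos h3']
          have hm : (e3 ⟨a, h3'⟩ : α) ∈ y' \ x' := (e3 ⟨a, h3'⟩).2
          simp only [g, hf, dif_neg (d13 _ hm), dif_neg (d23 _ hm), dif_pos hm]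
          simp [Subtype.coe_eta]
        · have hf : f a = e4 ⟨a, key a h1' h2' h3'⟩ := by
            simp only [f, dif_neg h1', dif_neg h2', dif_neg h3']
          have hm : (e4 ⟨a, key a h1' h2' h3'⟩ : α) ∈ (x' ∪ y')ᶜ := (e4 _).2
          obtain ⟨m1, m2, m3⟩ := d4 _ hm
          simp only [g, hf, dif_neg m1, dif_neg m2, dif_neg m3]
          simp [Subtype.coe_eta]
  have right : Function.RightInverse g f := by
    intro a
    by_cases h1' : a ∈ x' ∩ y'
    · have hf : g a = e1.symm ⟨a, h1'⟩ := dif_pos h1'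
      have hm : (e1.symm ⟨a, h1'⟩ : α) ∈ x ∩ y := (e1.symm ⟨a, h1'⟩).2
      simp only [f, hf, dif_pos hm]
      simp [Subtype.coe_eta]
    · by_cases h2' : a ∈ x' \ y'
      · have hf : g a = e2.symm ⟨a, h2'⟩ := by simp only [g, dif_neg h1', dif_pos h2']
        have hm : (e2.symm ⟨a, h2'⟩ : α) ∈ x \ y := (e2.symm ⟨a, h2'⟩).2
        simp only [f, hf, dif_neg (d12' _ hm), dif_pos hm]
        simp [Subtype.coe_eta]
      · by_cases h3' : a ∈ y' \ x'
        · have hf : g a = e3.symm ⟨a, h3'⟩ := by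
            simp only [g, dif_neg h1', dif_neg h2', dif_pos h3']
          have hm : (e3.symm ⟨a, h3'⟩ : α) ∈ y \ x := (e3.symm ⟨a, h3'⟩).2
          simp only [f, hf, dif_neg (d13' _ hm), dif_neg (d23' _ hm), dif_pos hm]
          simp [Subtype.coe_eta]
        · have hf : g a = e4.symm ⟨a, key' a h1' h2' h3'⟩ := by
            simp only [g, dif_neg h1', dif_neg h2', dif_neg h3']
          have hm : (e4.symm ⟨a, key' a h1' h2' h3'⟩ : α) ∈ (x ∪ y)ᶜ := (e4.symm _).2
          obtain ⟨m1, m2, m3⟩ := d4' _ hm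
          simp only [f, hf, dif_neg m1, dif_neg m2, dif_neg m3]
          simp [Subtype.coe_eta]
  let σ : Equiv.Perm α := ⟨f, g, left, right⟩
  have hfx : ∀ a ∈ x, f a ∈ x' := by
    intro a ha
    by_cases h1' : a ∈ x ∩ y
    · have : f a = e1 ⟨a, h1'⟩ := dif_pos h1'
      rw [this]; exact (mem_inter.mp (e1 ⟨a, h1'⟩).2).1
    · have h2' : a ∈ x \ y := by
        simp only [mem_inter, mem_sdiff] at *; tauto
      have : f a = e2 ⟨a, h2'⟩ := by simp only [f, dif_neg h1', dif_pos h2']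
      rw [this]; exact (mem_sdiff.mp (e2 ⟨a, h2'⟩).2).1
  have hfy : ∀ a ∈ y, f a ∈ y' := by
    intro a ha
    by_cases h1' : a ∈ x ∩ y
    · have : f a = e1 ⟨a, h1'⟩ := dif_pos h1'
      rw [this]; exact (mem_inter.mp (e1 ⟨a, h1'⟩).2).2
    · have h2' : a ∉ x \ y := by
        simp only [mem_inter, mem_sdiff] at *; tauto
      have h3' : a ∈ y \ x := by
        simp only [mem_inter, mem_sdiff] at *; tauto
      have : f a = e3 ⟨a, h3'⟩ := by simp only [f, dif_neg h1', dif_neg h2', dif_pos h3']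
      rw [this]; exact (mem_sdiff.mp (e3 ⟨a, h3'⟩).2).1
  refine ⟨σ, ?_, ?_⟩
  · apply eq_of_subset_of_card_le
    · intro b hb
      obtain ⟨a, ha, rfl⟩ := mem_image.mp hb
      exact hfx a ha
    · rw [card_image_of_injective _ σ.injective]; omega
  · apply eq_of_subset_of_card_le
    · intro b hb
      obtain ⟨a, ha, rfl⟩ := mem_image.mp hb
      exact hfy a ha
    · rw [card_image_of_injective _ σ.injective]; omega

/-- The sample space: tuples `(T₁, T₂, i, a, b)` where `(T₁, T₂, {i})` is a partition
of `[n]` into sets of sizes `2ℓ−1, 2ℓ−1, 1`, `a` is an `ℓ`-subset of `T₁ ∪ {i}` and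
`b` is an `ℓ`-subset of `T₂ ∪ {i}`.  The joint distribution described in the paper
(uniform partition, then `a`, `b` uniform and independent given the partition) is the
uniform distribution on this set, since all fibers have equal size. -/
def sampleSpace (n ℓ : ℕ) :
    Finset (Finset (Fin n) × Finset (Fin n) × Fin n × Finset (Fin n) × Finset (Fin n)) :=
  Finset.univ.filter fun t =>
    t.1.card = 2 * ℓ - 1 ∧ t.2.1.card = 2 * ℓ - 1 ∧ Disjoint t.1 t.2.1 ∧
    t.2.2.1 ∉ t.1 ∧ t.2.2.1 ∉ t.2.1 ∧
    t.2.2.2.1 ⊆ insert t.2.2.1 t.1 ∧ t.2.2.2.1.card = ℓ ∧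
    t.2.2.2.2 ⊆ insert t.2.2.1 t.2.1 ∧ t.2.2.2.2.card = ℓ

namespace UdisjAux

open Finset

variable {n ℓ : ℕ}

/-- Action of a permutation of `Fin n` on tuples. -/
def permMap (σ : Equiv.Perm (Fin n))
    (t : Finset (Fin n) × Finset (Fin n) × Fin n × Finset (Fin n) × Finset (Fin n)) :
    Finset (Fin n) × Finset (Fin n) × Fin n × Finset (Fin n) × Finset (Fin n) :=
  (t.1.image σ, t.2.1.image σ, σ t.2.2.1, t.2.2.2.1.image σ, t.2.2.2.2.image σ)

lemma permMap_permMap (σ τ : Equiv.Perm (Fin n)) (t) :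
    permMap σ (permMap τ t) = permMap (σ * τ) t := by
  simp only [permMap, image_image]
  rfl

lemma permMap_one (t) : permMap (1 : Equiv.Perm (Fin n)) t = t := by
  simp [permMap]

lemma permMap_mem (σ : Equiv.Perm (Fin n)) {t} (ht : t ∈ sampleSpace n ℓ) :
    permMap σ t ∈ sampleSpace n ℓ := by
  simp only [sampleSpace, mem_filter, mem_univ, true_and, permMap] at *
  obtain ⟨c1, c2, dj, ni1, ni2, sa, ca, sb, cb⟩ := ht
  refine ⟨?_, ?_, ?_, ?_, ?_, ?_, ?_, ?_, ?_⟩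
  · rw [card_image_of_injective _ σ.injective]; exact c1
  · rw [card_image_of_injective _ σ.injective]; exact c2
  · exact (disjoint_image σ.injective).2 dj
  · rw [σ.injective.mem_finset_image]; exact ni1
  · rw [σ.injective.mem_finset_image]; exact ni2
  · rw [← image_insert]; exact image_subset_image sa
  · rw [card_image_of_injective _ σ.injective]; exact ca
  · rw [← image_insert]; exact image_subset_image sb
  · rw [card_image_of_injective _ σ.injective]; exact cb

lemma card_filter_perm (σ : Equiv.Perm (Fin n))
    (Q Q' : Finset (Fin n) × Finset (Fin n) × Fin n × Finset (Fin n) × Finset (Fin n) → Prop)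
    [DecidablePred Q] [DecidablePred Q']
    (hQ : ∀ t ∈ sampleSpace n ℓ, (Q t ↔ Q' (permMap σ t))) :
    ((sampleSpace n ℓ).filter Q).card = ((sampleSpace n ℓ).filter Q').card := by
  refine card_nbij' (permMap σ) (permMap σ⁻¹) ?_ ?_ ?_ ?_
  · intro t ht
    rw [mem_coe, mem_filter] at *
    exact ⟨permMap_mem σ ht.1, (hQ t ht.1).1 ht.2⟩
  · intro t ht
    rw [mem_coe, mem_filter] at *
    refine ⟨permMap_mem σ⁻¹ ht.1, ?_⟩
    rw [hQ _ (permMap_mem σ⁻¹ ht.1), permMap_permMap, mul_inv_cancel, permMap_one]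
    exact ht.2
  · intro t _; rw [permMap_permMap, inv_mul_cancel, permMap_one]
  · intro t _; rw [permMap_permMap, mul_inv_cancel, permMap_one]

lemma card_powersetCard_filter_mem {α : Type*} [DecidableEq α] {i : α} {s : Finset α}
    (hi : i ∉ s) (k : ℕ) :
    (((insert i s).powersetCard (k + 1)).filter fun a => i ∈ a).card = s.card.choose k := by
  rw [powersetCard_succ_insert hi, filter_union]
  have h1 : (s.powersetCard (k + 1)).filter (fun a => i ∈ a) = ∅ := by
    rw [filter_eq_empty_iff]
    intro a ha hia
    exact hi ((mem_powersetCard.mp ha).1 hia)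
  have h2 : ((s.powersetCard k).image (insert i)).filter (fun a => i ∈ a)
      = (s.powersetCard k).image (insert i) := by
    rw [filter_eq_self]
    intro a ha
    obtain ⟨b, _, rfl⟩ := mem_image.mp ha
    exact mem_insert_self i b
  rw [h1, h2, empty_union, card_image_of_injOn, card_powersetCard]
  intro a ha b hb h
  have hia : i ∉ a := fun h' => hi ((mem_powersetCard.mp ha).1 h')
  have hib : i ∉ b := fun h' => hi ((mem_powersetCard.mp hb).1 h')
  rw [← erase_insert hia, ← erase_insert hib, h]

lemma fiber_card (hl : 1 ≤ ℓ) (p : Finset (Fin n) × Finset (Fin n) × Fin n)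
    (hp : p ∈ (sampleSpace n ℓ).image fun t => (t.1, t.2.1, t.2.2.1)) :
    ((sampleSpace n ℓ).filter fun t => (t.1, t.2.1, t.2.2.1) = p).card
      = (2 * ℓ).choose ℓ * (2 * ℓ).choose ℓ := by
  obtain ⟨t₀, ht₀, hpt₀⟩ := mem_image.mp hp
  simp only [sampleSpace, mem_filter, mem_univ, true_and] at ht₀
  obtain ⟨c1, c2, dj, ni1, ni2, -, -, -, -⟩ := ht₀
  subst hpt₀
  have e1 : (insert t₀.2.2.1 t₀.1).card = 2 * ℓ := by
    rw [card_insert_of_notMem ni1, c1]; omega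
  have e2 : (insert t₀.2.2.1 t₀.2.1).card = 2 * ℓ := by
    rw [card_insert_of_notMem ni2, c2]; omega
  rw [card_nbij' (i := fun t => (t.2.2.2.1, t.2.2.2.2))
      (j := fun ab => (t₀.1, t₀.2.1, t₀.2.2.1, ab.1, ab.2))
      (t := ((insert t₀.2.2.1 t₀.1).powersetCard ℓ) ×ˢ ((insert t₀.2.2.1 t₀.2.1).powersetCard ℓ))
      ?_ ?_ ?_ ?_]
  · rw [card_product, card_powersetCard, card_powersetCard, e1, e2]
  · intro t ht
    rw [mem_coe, mem_filter] at ht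
    obtain ⟨hts, hproj⟩ := ht
    simp only [sampleSpace, mem_filter, mem_univ, true_and] at hts
    obtain ⟨-, -, -, -, -, sa, ca, sb, cb⟩ := hts
    obtain ⟨h1, h2, h3⟩ : t.1 = t₀.1 ∧ t.2.1 = t₀.2.1 ∧ t.2.2.1 = t₀.2.2.1 := by
      simpa [Prod.ext_iff] using hproj
    rw [mem_coe, mem_product, mem_powersetCard, mem_powersetCard]
    simp only [h1, h2, h3] at sa sb
    exact ⟨⟨sa, ca⟩, sb, cb⟩
  · intro ab hab
    rw [mem_coe, mem_product, mem_powersetCard, mem_powersetCard] at hab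
    rw [mem_coe, mem_filter]
    refine ⟨?_, rfl⟩
    simp only [sampleSpace, mem_filter, mem_univ, true_and]
    exact ⟨c1, c2, dj, ni1, ni2, hab.1.1, hab.1.2, hab.2.1, hab.2.2⟩
  · intro t ht
    rw [mem_coe, mem_filter] at ht
    obtain ⟨h1, h2, h3⟩ : t.1 = t₀.1 ∧ t.2.1 = t₀.2.1 ∧ t.2.2.1 = t₀.2.2.1 := by
      simpa [Prod.ext_iff] using ht.2
    ext <;> simp [h1, h2, h3]
  · intro ab _; rfl

lemma fiber_card_event (hl : 1 ≤ ℓ) (p : Finset (Fin n) × Finset (Fin n) × Fin n)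
    (hp : p ∈ (sampleSpace n ℓ).image fun t => (t.1, t.2.1, t.2.2.1)) :
    ((sampleSpace n ℓ).filter fun t =>
        (t.2.2.1 ∈ t.2.2.2.1 ∧ t.2.2.1 ∈ t.2.2.2.2) ∧ (t.1, t.2.1, t.2.2.1) = p).card
      = (2 * ℓ - 1).choose (ℓ - 1) * (2 * ℓ - 1).choose (ℓ - 1) := by
  obtain ⟨t₀, ht₀, hpt₀⟩ := mem_image.mp hp
  simp only [sampleSpace, mem_filter, mem_univ, true_and] at ht₀
  obtain ⟨c1, c2, dj, ni1, ni2, -, -, -, -⟩ := ht₀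
  subst hpt₀
  have hll : ℓ - 1 + 1 = ℓ := by omega
  rw [card_nbij' (i := fun t => (t.2.2.2.1, t.2.2.2.2))
      (j := fun ab => (t₀.1, t₀.2.1, t₀.2.2.1, ab.1, ab.2))
      (t := (((insert t₀.2.2.1 t₀.1).powersetCard ℓ).filter fun a => t₀.2.2.1 ∈ a) ×ˢ
            (((insert t₀.2.2.1 t₀.2.1).powersetCard ℓ).filter fun a => t₀.2.2.1 ∈ a))
      ?_ ?_ ?_ ?_]
  · have k1 := card_powersetCard_filter_mem ni1 (ℓ - 1)
    have k2 := card_powersetCard_filter_mem ni2 (ℓ - 1)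
    rw [hll] at k1 k2
    rw [card_product, k1, k2, c1, c2]
  · intro t ht
    rw [mem_coe, mem_filter] at ht
    obtain ⟨hts, hev, hproj⟩ := ht
    simp only [sampleSpace, mem_filter, mem_univ, true_and] at hts
    obtain ⟨-, -, -, -, -, sa, ca, sb, cb⟩ := hts
    obtain ⟨h1, h2, h3⟩ : t.1 = t₀.1 ∧ t.2.1 = t₀.2.1 ∧ t.2.2.1 = t₀.2.2.1 := by
      simpa [Prod.ext_iff] using hproj
    rw [mem_coe, mem_product, mem_filter, mem_filter, mem_powersetCard, mem_powersetCard]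
    simp only [h1, h2, h3] at sa sb hev
    exact ⟨⟨⟨sa, ca⟩, hev.1⟩, ⟨sb, cb⟩, hev.2⟩
  · intro ab hab
    rw [mem_coe, mem_product, mem_filter, mem_filter, mem_powersetCard, mem_powersetCard] at hab
    rw [mem_coe, mem_filter]
    refine ⟨?_, ⟨hab.1.2, hab.2.2⟩, rfl⟩
    simp only [sampleSpace, mem_filter, mem_univ, true_and]
    exact ⟨c1, c2, dj, ni1, ni2, hab.1.1.1, hab.1.1.2, hab.2.1.1, hab.2.1.2⟩
  · intro t ht
    rw [mem_coe, mem_filter] at ht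
    obtain ⟨h1, h2, h3⟩ : t.1 = t₀.1 ∧ t.2.1 = t₀.2.1 ∧ t.2.2.1 = t₀.2.2.1 := by
      simpa [Prod.ext_iff] using ht.2.2
    ext <;> simp [h1, h2, h3]
  · intro ab _; rfl

lemma part1 (hl : 1 ≤ ℓ) :
    4 * ((sampleSpace n ℓ).filter fun t => t.2.2.1 ∈ t.2.2.2.1 ∧ t.2.2.1 ∈ t.2.2.2.2).card
      = (sampleSpace n ℓ).card := by
  classical
  set S := sampleSpace n ℓ with hSdef
  set proj : Finset (Fin n) × Finset (Fin n) × Fin n × Finset (Fin n) × Finset (Fin n) →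
      Finset (Fin n) × Finset (Fin n) × Fin n := fun t => (t.1, t.2.1, t.2.2.1) with hproj
  set P := S.image proj with hP
  set c := (2 * ℓ - 1).choose (ℓ - 1) with hc
  have key : (2 * ℓ).choose ℓ = 2 * c := by
    have h1 : (2 * ℓ).choose ℓ
        = (2 * ℓ - 1).choose (ℓ - 1) + (2 * ℓ - 1).choose (ℓ - 1 + 1) := by
      rw [← Nat.choose_succ_succ]
      congr 1 <;> omega
    have h2 : (2 * ℓ - 1).choose (ℓ - 1 + 1) = (2 * ℓ - 1).choose (ℓ - 1) := by
      rw [← Nat.choose_symm (by omega : ℓ - 1 ≤ 2 * ℓ - 1)]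
      congr 1
      omega
    rw [h1, h2, hc]; ring
  have hS : S.card = ∑ p ∈ P, (S.filter fun t => proj t = p).card :=
    card_eq_sum_card_fiberwise fun t ht => mem_image_of_mem _ ht
  have hE : (S.filter fun t => t.2.2.1 ∈ t.2.2.2.1 ∧ t.2.2.1 ∈ t.2.2.2.2).card
      = ∑ p ∈ P, ((S.filter fun t => t.2.2.1 ∈ t.2.2.2.1 ∧ t.2.2.1 ∈ t.2.2.2.2).filter
          fun t => proj t = p).card :=
    card_eq_sum_card_fiberwise fun t ht => mem_image_of_mem _ (mem_of_mem_filter t ht)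
  have hfib : ∀ p ∈ P,
      (S.filter fun t => proj t = p).card = (2 * ℓ).choose ℓ * (2 * ℓ).choose ℓ :=
    fun p hp => fiber_card hl p hp
  have hfibE : ∀ p ∈ P, ((S.filter fun t => t.2.2.1 ∈ t.2.2.2.1 ∧ t.2.2.1 ∈ t.2.2.2.2).filter
      fun t => proj t = p).card = c * c := by
    intro p hp
    rw [filter_filter]
    exact fiber_card_event hl p hp
  rw [hE, sum_congr rfl hfibE, hS, sum_congr rfl hfib, sum_const, sum_const, smul_eq_mul,
    smul_eq_mul, key]
  ring

lemma exists_tuple_core (hn4 : n = 4 * ℓ - 1) (hl : 1 ≤ ℓ)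
    (x y : Finset (Fin n)) (i : Fin n)
    (hx : x.card = ℓ) (hy : y.card = ℓ)
    (hxy : ∀ z, z ∈ x → z ∈ y → z = i) :
    ∃ T₁ T₂ : Finset (Fin n), (T₁, T₂, i, x, y) ∈ sampleSpace n ℓ := by
  have hcardn : Fintype.card (Fin n) = n := Fintype.card_fin n
  have hsub : x.erase i ⊆ (insert i y)ᶜ := by
    intro z hz
    rw [mem_erase] at hz
    rw [mem_compl, mem_insert]
    rintro (rfl | hzy)
    · exact hz.1 rfl
    · exact hz.1 (hxy z hz.2 hzy)
  have hiy' : ((insert i y)ᶜ).card = n - (insert i y).card := by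
    rw [card_compl, hcardn]
  have hins : (insert i y).card ≤ ℓ + 1 := by
    apply le_trans (card_insert_le _ _); omega
  have hxe : (x.erase i).card ≤ ℓ := le_trans card_erase_le (le_of_eq hx)
  obtain ⟨T₁, hT₁l, hT₁r, hT₁c⟩ :=
    exists_subsuperset_card_eq hsub (n := 2 * ℓ - 1) (by omega) (by omega)
  have hiT₁ : i ∉ T₁ := by
    intro h
    have := hT₁r h
    rw [mem_compl] at this
    exact this (mem_insert_self i y)
  have hyT₁ : ∀ z ∈ y, z ∉ T₁ := by
    intro z hz h
    have := hT₁r h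
    rw [mem_compl, mem_insert] at this
    exact this (Or.inr hz)
  refine ⟨T₁, (insert i T₁)ᶜ, ?_⟩
  have hiiT : (insert i T₁).card = 2 * ℓ := by
    rw [card_insert_of_notMem hiT₁, hT₁c]; omega
  simp only [sampleSpace, mem_filter, mem_univ, true_and]
  refine ⟨hT₁c, ?_, ?_, hiT₁, ?_, ?_, hx, ?_, hy⟩
  · rw [card_compl, hcardn, hiiT]; omega
  · rw [disjoint_right]
    intro z hz
    rw [mem_compl] at hz
    intro h
    exact hz (mem_insert_of_mem h)
  · rw [mem_compl]
    intro h
    exact h (mem_insert_self i T₁)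
  · intro z hz
    by_cases hzi : z = i
    · subst hzi; exact mem_insert_self _ _
    · exact mem_insert_of_mem (hT₁l (mem_erase.mpr ⟨hzi, hz⟩))
  · intro z hz
    by_cases hzi : z = i
    · subst hzi; exact mem_insert_self _ _
    · apply mem_insert_of_mem
      rw [mem_compl, mem_insert]
      push_neg
      exact ⟨hzi, hyT₁ z hz⟩

end UdisjAux

open Finset UdisjAux in
/-- Let `n ≡ 3 (mod 4)`, `ℓ = (n+1)/4`, and pick a uniformly random partition
`(T₁, T₂, {i})` of `[n]` into sizes `2ℓ−1, 2ℓ−1, 1`; conditioned on it, let `a` be a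
uniform `ℓ`-subset of `T₁ ∪ {i}` and `b` an independent uniform `ℓ`-subset of
`T₂ ∪ {i}`.  Then `P(i ∈ a and i ∈ b) = 1/4`; on this event `(a, b)` lies in `B`
(barely intersecting pairs) and its conditional distribution is uniform on `B`,
while on the complementary event `(a, b)` lies in `A` (disjoint pairs) with uniform
conditional distribution on `A`. -/
theorem udisj_distribution (n ℓ : ℕ) (hn : n % 4 = 3) (hℓ : ℓ = (n + 1) / 4) :
    -- P(i ∈ a ∧ i ∈ b) = 1/4
    4 * ((sampleSpace n ℓ).filter fun t => t.2.2.1 ∈ t.2.2.2.1 ∧ t.2.2.1 ∈ t.2.2.2.2).card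
      = (sampleSpace n ℓ).card ∧
    -- on the event, (a,b) ∈ B; off the event, (a,b) ∈ A
    (∀ t ∈ sampleSpace n ℓ,
      ((t.2.2.1 ∈ t.2.2.2.1 ∧ t.2.2.1 ∈ t.2.2.2.2) →
        (t.2.2.2.1.card = ℓ ∧ t.2.2.2.2.card = ℓ ∧ (t.2.2.2.1 ∩ t.2.2.2.2).card = 1)) ∧
      (¬(t.2.2.1 ∈ t.2.2.2.1 ∧ t.2.2.1 ∈ t.2.2.2.2) →
        (t.2.2.2.1.card = ℓ ∧ t.2.2.2.2.card = ℓ ∧ Disjoint t.2.2.2.1 t.2.2.2.2))) ∧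
    -- conditioned on the event, (a,b) is uniform on B
    (∃ k : ℕ, 0 < k ∧ ∀ x y : Finset (Fin n),
      x.card = ℓ → y.card = ℓ → (x ∩ y).card = 1 →
      ((sampleSpace n ℓ).filter fun t =>
        (t.2.2.1 ∈ t.2.2.2.1 ∧ t.2.2.1 ∈ t.2.2.2.2) ∧ t.2.2.2.1 = x ∧ t.2.2.2.2 = y).card
        = k) ∧
    -- conditioned on the complementary event, (a,b) is uniform on A
    (∃ k : ℕ, 0 < k ∧ ∀ x y : Finset (Fin n),
      x.card = ℓ → y.card = ℓ → Disjoint x y →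
      ((sampleSpace n ℓ).filter fun t =>
        ¬(t.2.2.1 ∈ t.2.2.2.1 ∧ t.2.2.1 ∈ t.2.2.2.2) ∧ t.2.2.2.1 = x ∧ t.2.2.2.2 = y).card
        = k) := by
  have hl : 1 ≤ ℓ := by omega
  have hn4 : n = 4 * ℓ - 1 := by omega
  have hcardn : Fintype.card (Fin n) = n := Fintype.card_fin n
  refine ⟨part1 hl, ?_, ?_, ?_⟩
  · -- part 2
    intro t ht
    simp only [sampleSpace, mem_filter, mem_univ, true_and] at ht
    obtain ⟨c1, c2, dj, ni1, ni2, sa, ca, sb, cb⟩ := ht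
    constructor
    · rintro ⟨ha, hb⟩
      refine ⟨ca, cb, ?_⟩
      have hint : t.2.2.2.1 ∩ t.2.2.2.2 = {t.2.2.1} := by
        ext z
        rw [mem_inter, mem_singleton]
        constructor
        · rintro ⟨hz1, hz2⟩
          rcases mem_insert.mp (sa hz1) with h | h
          · exact h
          · rcases mem_insert.mp (sb hz2) with h' | h'
            · exact h'
            · exact absurd h' (disjoint_left.mp dj h)
        · rintro rfl; exact ⟨ha, hb⟩
      rw [hint, card_singleton]
    · intro h
      refine ⟨ca, cb, ?_⟩
      rw [disjoint_left]
      intro z hz1 hz2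
      rcases mem_insert.mp (sa hz1) with h1 | h1
      · subst h1
        exact h ⟨hz1, hz2⟩
      · rcases mem_insert.mp (sb hz2) with h2 | h2
        · exact ni1 (h2 ▸ h1)
        · exact absurd h2 (disjoint_left.mp dj h1)
  · -- part 3 : uniform on B
    obtain ⟨x₀, -, hx₀⟩ := exists_subset_card_eq
      (s := (univ : Finset (Fin n))) (n := ℓ) (by rw [card_univ, hcardn]; omega)
    obtain ⟨i₀, hi₀⟩ := card_pos.mp (by omega : 0 < x₀.card)
    obtain ⟨y₀', hy₀'sub, hy₀'c⟩ := exists_subset_card_eq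
      (s := x₀ᶜ) (n := ℓ - 1) (by rw [card_compl, hcardn, hx₀]; omega)
    have hi₀y₀' : i₀ ∉ y₀' := fun h => (mem_compl.mp (hy₀'sub h)) hi₀
    set y₀ := insert i₀ y₀' with hy₀def
    have hy₀ : y₀.card = ℓ := by
      rw [hy₀def, card_insert_of_notMem hi₀y₀', hy₀'c]; omega
    have hinter : x₀ ∩ y₀ = {i₀} := by
      ext z
      rw [mem_inter, mem_singleton, hy₀def, mem_insert]
      constructor
      · rintro ⟨hzx, rfl | hz'⟩
        · rfl
        · exact absurd hzx (mem_compl.mp (hy₀'sub hz'))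
      · rintro rfl; exact ⟨hi₀, Or.inl rfl⟩
    have hinterc : (x₀ ∩ y₀).card = 1 := by rw [hinter, card_singleton]
    refine ⟨((sampleSpace n ℓ).filter fun t =>
        (t.2.2.1 ∈ t.2.2.2.1 ∧ t.2.2.1 ∈ t.2.2.2.2) ∧ t.2.2.2.1 = x₀ ∧ t.2.2.2.2 = y₀).card,
        ?_, ?_⟩
    · -- positivity
      obtain ⟨T₁, T₂, hmem⟩ := exists_tuple_core hn4 hl x₀ y₀ i₀ hx₀ hy₀
        (fun z hzx hzy => by
          have : z ∈ x₀ ∩ y₀ := mem_inter.mpr ⟨hzx, hzy⟩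
          rwa [hinter, mem_singleton] at this)
      apply card_pos.mpr
      refine ⟨(T₁, T₂, i₀, x₀, y₀), mem_filter.mpr ⟨hmem, ⟨hi₀, mem_insert_self _ _⟩, rfl, rfl⟩⟩
    · intro x y hx hy hxy
      obtain ⟨σ, hσx, hσy⟩ := exists_perm_maps x y x₀ y₀ (by rw [hx, hx₀])
        (by rw [hy, hy₀]) (by rw [hxy, hinterc])
      apply card_filter_perm σ
      intro t ht
      simp only [permMap]
      rw [σ.injective.mem_finset_image, σ.injective.mem_finset_image,
        ← hσx, ← hσy]
      constructor
      · rintro ⟨hev, rfl, rfl⟩; exact ⟨hev, rfl, rfl⟩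
      · rintro ⟨hev, h1, h2⟩
        exact ⟨hev, Finset.image_injective σ.injective h1,
          Finset.image_injective σ.injective h2⟩
  · -- part 4 : uniform on A
    obtain ⟨x₀, -, hx₀⟩ := exists_subset_card_eq
      (s := (univ : Finset (Fin n))) (n := ℓ) (by rw [card_univ, hcardn]; omega)
    obtain ⟨y₀, hy₀sub, hy₀⟩ := exists_subset_card_eq
      (s := x₀ᶜ) (n := ℓ) (by rw [card_compl, hcardn, hx₀]; omega)
    have hdisj : Disjoint x₀ y₀ := by
      rw [disjoint_right]
      intro z hz
      exact mem_compl.mp (hy₀sub hz)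
    have hinterc : (x₀ ∩ y₀).card = 0 := by
      rw [disjoint_iff_inter_eq_empty.mp hdisj, card_empty]
    have hiex : ∃ i : Fin n, i ∉ x₀ ∧ i ∉ y₀ := by
      have hcu : ((x₀ ∪ y₀)ᶜ).card = n - 2 * ℓ := by
        rw [card_compl, hcardn, card_union_of_disjoint hdisj, hx₀, hy₀]; omega
      obtain ⟨i, hi⟩ := card_pos.mp (by omega : 0 < ((x₀ ∪ y₀)ᶜ).card)
      rw [mem_compl, mem_union] at hi
      push_neg at hi
      exact ⟨i, hi⟩
    obtain ⟨i₀, hi₀x, hi₀y⟩ := hiex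
    refine ⟨((sampleSpace n ℓ).filter fun t =>
        ¬(t.2.2.1 ∈ t.2.2.2.1 ∧ t.2.2.1 ∈ t.2.2.2.2) ∧ t.2.2.2.1 = x₀ ∧ t.2.2.2.2 = y₀).card,
        ?_, ?_⟩
    · obtain ⟨T₁, T₂, hmem⟩ := exists_tuple_core hn4 hl x₀ y₀ i₀ hx₀ hy₀
        (fun z hzx hzy => absurd hzy (disjoint_left.mp hdisj hzx))
      apply card_pos.mpr
      refine ⟨(T₁, T₂, i₀, x₀, y₀),
        mem_filter.mpr ⟨hmem, fun h => hi₀x h.1, rfl, rfl⟩⟩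
    · intro x y hx hy hxy
      obtain ⟨σ, hσx, hσy⟩ := exists_perm_maps x y x₀ y₀ (by rw [hx, hx₀])
        (by rw [hy, hy₀])
        (by rw [disjoint_iff_inter_eq_empty.mp hxy, card_empty, hinterc])
      apply card_filter_perm σ
      intro t ht
      simp only [permMap]
      rw [σ.injective.mem_finset_image, σ.injective.mem_finset_image,
        ← hσx, ← hσy]
      constructor
      · rintro ⟨hev, rfl, rfl⟩; exact ⟨hev, rfl, rfl⟩
      · rintro ⟨hev, h1, h2⟩
        exact ⟨hev, Finset.image_injective σ.injective h1,
          Finset.image_injective σ.injective h2⟩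
end
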